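/- arXiv:2601.21705 — 4 statements merged into one kernel-verified Lean document; each statement's English description precedes it below -/
import Mathlib

section
/- For all y > 0 one has b*_{r+q} < b*_r < b*(y); that is, the distress-dependent dividend boundary b*(y) = y + Δ(y) strictly exceeds the classical boundary b*_r, which in turn strictly exceeds b*_{r+q}. -/
open Real Set Filter

noncomputable def gam1 (μ σ ρ : ℝ) : ℝ := Real.sqrt (μ^2/σ^4 + 2*ρ/σ^2) - μ/σ^2

noncomputable def gam2 (μ σ ρ : ℝ) : ℝ := -Real.sqrt (μ^2/σ^4 + 2*ρ/σ^2) - μ/σ^2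

/-- The classical optimal dividend boundary `b*_ρ`. -/
noncomputable def bstar (μ σ ρ : ℝ) : ℝ :=
  Real.log ((gam2 μ σ ρ)^2 / (gam1 μ σ ρ)^2) / (gam1 μ σ ρ - gam2 μ σ ρ)

/-- The classical value function `V_ρ`. -/
noncomputable def Vfun (μ σ ρ x : ℝ) : ℝ :=
  if x < bstar μ σ ρ then
    (Real.exp (gam1 μ σ ρ * x) - Real.exp (gam2 μ σ ρ * x)) /
      (gam1 μ σ ρ * Real.exp (gam1 μ σ ρ * bstar μ σ ρ) -
        gam2 μ σ ρ * Real.exp (gam2 μ σ ρ * bstar μ σ ρ))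
  else
    (Real.exp (gam1 μ σ ρ * bstar μ σ ρ) - Real.exp (gam2 μ σ ρ * bstar μ σ ρ)) /
      (gam1 μ σ ρ * Real.exp (gam1 μ σ ρ * bstar μ σ ρ) -
        gam2 μ σ ρ * Real.exp (gam2 μ σ ρ * bstar μ σ ρ)) + x - bstar μ σ ρ

/-- `δ(y) = e^{γ₁(r+q)y} − e^{γ₂(r+q)y}`. -/
noncomputable def del (μ σ r q y : ℝ) : ℝ :=
  Real.exp (gam1 μ σ (r+q) * y) - Real.exp (gam2 μ σ (r+q) * y)

/-- `δ'(y)`. -/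
noncomputable def delP (μ σ r q y : ℝ) : ℝ :=
  gam1 μ σ (r+q) * Real.exp (gam1 μ σ (r+q) * y) -
    gam2 μ σ (r+q) * Real.exp (gam2 μ σ (r+q) * y)

/-- `δ''(y)`. -/
noncomputable def delPP (μ σ r q y : ℝ) : ℝ :=
  (gam1 μ σ (r+q))^2 * Real.exp (gam1 μ σ (r+q) * y) -
    (gam2 μ σ (r+q))^2 * Real.exp (gam2 μ σ (r+q) * y)

/-- `y_u := b*_{r+q} + μ/r − μ/(r+q)`. -/
noncomputable def yUpper (μ σ r q : ℝ) : ℝ := bstar μ σ (r+q) + μ/r - μ/(r+q)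

/-- `Δ(y)`. -/
noncomputable def DeltaF (μ σ r q y : ℝ) : ℝ :=
  (1/(gam1 μ σ r - gam2 μ σ r)) *
    Real.log ((gam2 μ σ r)^2 * (delP μ σ r q y - gam1 μ σ r * del μ σ r q y) /
      ((gam1 μ σ r)^2 * (delP μ σ r q y - gam2 μ σ r * del μ σ r q y)))

/-- `b*(y) = y + Δ(y)`. -/
noncomputable def bstarY (μ σ r q y : ℝ) : ℝ := y + DeltaF μ σ r q y

noncomputable def psiF (μ σ ρ x : ℝ) : ℝ := Real.exp (gam1 μ σ ρ * x)
noncomputable def phiF (μ σ ρ x : ℝ) : ℝ := Real.exp (gam2 μ σ ρ * x)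
noncomputable def psiP (μ σ ρ x : ℝ) : ℝ := gam1 μ σ ρ * Real.exp (gam1 μ σ ρ * x)
noncomputable def phiP (μ σ ρ x : ℝ) : ℝ := gam2 μ σ ρ * Real.exp (gam2 μ σ ρ * x)

/-- `η(y;b) = ψ'_r(b)φ_r(y) − φ'_r(b)ψ_r(y)`. -/
noncomputable def etaF (μ σ r y b : ℝ) : ℝ :=
  psiP μ σ r b * phiF μ σ r y - phiP μ σ r b * psiF μ σ r y

/-- `η'(y;b)` (derivative in `y`). -/
noncomputable def etaP (μ σ r y b : ℝ) : ℝ :=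
  psiP μ σ r b * phiP μ σ r y - phiP μ σ r b * psiP μ σ r y

/-- `K₁(y)`. -/
noncomputable def K1 (μ σ r q y : ℝ) : ℝ :=
  (psiF μ σ r y * etaP μ σ r y (bstarY μ σ r q y) -
    psiP μ σ r y * etaF μ σ r y (bstarY μ σ r q y)) /
  (psiP μ σ r (bstarY μ σ r q y) *
    (del μ σ r q y * etaP μ σ r y (bstarY μ σ r q y) -
      delP μ σ r q y * etaF μ σ r y (bstarY μ σ r q y)))

/-- `K₂(y) = −K₁(y)`. -/
noncomputable def K2 (μ σ r q y : ℝ) : ℝ := -K1 μ σ r q y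

/-- `K₃(y)`. -/
noncomputable def K3 (μ σ r q y : ℝ) : ℝ :=
  (phiP μ σ r (bstarY μ σ r q y) *
      (del μ σ r q y * psiP μ σ r y - delP μ σ r q y * psiF μ σ r y) +
    del μ σ r q y * etaP μ σ r y (bstarY μ σ r q y) -
      delP μ σ r q y * etaF μ σ r y (bstarY μ σ r q y)) /
  (psiP μ σ r (bstarY μ σ r q y) *
    (del μ σ r q y * etaP μ σ r y (bstarY μ σ r q y) -
      delP μ σ r q y * etaF μ σ r y (bstarY μ σ r q y)))

/-- `K₄(y)`. -/
noncomputable def K4 (μ σ r q y : ℝ) : ℝ :=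
  (psiF μ σ r y * delP μ σ r q y - psiP μ σ r y * del μ σ r q y) /
  (del μ σ r q y * etaP μ σ r y (bstarY μ σ r q y) -
    delP μ σ r q y * etaF μ σ r y (bstarY μ σ r q y))

/-- The candidate value function `w(·;y)` in the subcritical regime. -/
noncomputable def wfun (μ σ r q y x : ℝ) : ℝ :=
  if x < y then
    K1 μ σ r q y * Real.exp (gam1 μ σ (r+q) * x) + K2 μ σ r q y * Real.exp (gam2 μ σ (r+q) * x)
  else if x < bstarY μ σ r q y then
    K3 μ σ r q y * Real.exp (gam1 μ σ r * x) + K4 μ σ r q y * Real.exp (gam2 μ σ r * x)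
  else
    K3 μ σ r q y * Real.exp (gam1 μ σ r * bstarY μ σ r q y) +
      K4 μ σ r q y * Real.exp (gam2 μ σ r * bstarY μ σ r q y) + x - bstarY μ σ r q y

/-- The function `f` characterising the critical level `y_l`. -/
noncomputable def fF (μ σ r q y : ℝ) : ℝ :=
  (-(gam1 μ σ r / gam2 μ σ r) * delP μ σ r q y + gam1 μ σ r * del μ σ r q y) *
    ((gam2 μ σ r)^2/(gam1 μ σ r)^2 *
      ((delP μ σ r q y - gam1 μ σ r * del μ σ r q y) /
        (delP μ σ r q y - gam2 μ σ r * del μ σ r q y)))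
      ^ (gam1 μ σ r / (gam1 μ σ r - gam2 μ σ r))
  - delP μ σ r q (bstar μ σ (r+q))

noncomputable def e1F (μ σ r q b : ℝ) : ℝ :=
  (phiF μ σ (r+q) b - phiP μ σ (r+q) b * Vfun μ σ (r+q) b) /
  (psiP μ σ (r+q) b * phiF μ σ (r+q) b - psiF μ σ (r+q) b * phiP μ σ (r+q) b)

noncomputable def e2F (μ σ r q b : ℝ) : ℝ :=
  (psiP μ σ (r+q) b * Vfun μ σ (r+q) b - psiF μ σ (r+q) b) /
  (psiP μ σ (r+q) b * phiF μ σ (r+q) b - psiF μ σ (r+q) b * phiP μ σ (r+q) b)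

noncomputable def e3F (μ σ r q b y : ℝ) : ℝ :=
  (e1F μ σ r q b * (phiF μ σ r y * psiP μ σ (r+q) y - phiP μ σ r y * psiF μ σ (r+q) y) +
    e2F μ σ r q b * (phiF μ σ r y * phiP μ σ (r+q) y - phiP μ σ r y * phiF μ σ (r+q) y)) /
  (psiP μ σ r y * phiF μ σ r y - psiF μ σ r y * phiP μ σ r y)

noncomputable def e4F (μ σ r q b y : ℝ) : ℝ :=
  (e1F μ σ r q b * (psiP μ σ r y * psiF μ σ (r+q) y - psiF μ σ r y * psiP μ σ (r+q) y) +
    e2F μ σ r q b * (psiP μ σ r y * phiF μ σ (r+q) y - psiF μ σ r y * phiP μ σ (r+q) y)) /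
  (psiP μ σ r y * phiF μ σ r y - psiF μ σ r y * phiP μ σ r y)

/-- The function `H(b,y)` from the critical regime. -/
noncomputable def Hfun (μ σ r q b y : ℝ) : ℝ :=
  (gam1 μ σ r - gam2 μ σ r) *
    (-gam2 μ σ r / gam1 μ σ r) ^ ((gam1 μ σ r + gam2 μ σ r)/(gam1 μ σ r - gam2 μ σ r)) *
    (e3F μ σ r q b y) ^ (-gam2 μ σ r/(gam1 μ σ r - gam2 μ σ r)) *
    (-e4F μ σ r q b y) ^ (gam1 μ σ r/(gam1 μ σ r - gam2 μ σ r))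

/-- `Λ(b,y) = −e₄(b,y)/e₃(b,y)`. -/
noncomputable def Lamfun (μ σ r q b y : ℝ) : ℝ := -e4F μ σ r q b y / e3F μ σ r q b y

/-- `L(y)`. -/
noncomputable def Lfun (μ σ r q y : ℝ) : ℝ :=
  (1/(gam1 μ σ r - gam2 μ σ r)) *
    Real.log ((gam2 μ σ r)^2/(gam1 μ σ r)^2 * Lamfun μ σ r q y y) - y

lemma aux_sinh_lt (x : ℝ) (hx : 0 < x) : Real.sinh x < x * Real.cosh x := by
  have key : StrictMonoOn (fun t : ℝ => t * Real.cosh t - Real.sinh t) (Set.Ici 0) := by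
    apply strictMonoOn_of_deriv_pos (convex_Ici 0)
    · exact ((continuous_id.mul Real.continuous_cosh).sub Real.continuous_sinh).continuousOn
    · intro t ht
      rw [interior_Ici] at ht
      have h1 : HasDerivAt (fun t : ℝ => t * Real.cosh t - Real.sinh t) (t * Real.sinh t) t := by
        have h := ((hasDerivAt_id t).mul (Real.hasDerivAt_cosh t)).sub (Real.hasDerivAt_sinh t)
        exact h.congr_deriv (by simp only [id_eq]; ring)
      rw [h1.deriv]
      exact mul_pos ht (Real.sinh_pos_iff.mpr ht)
  have h0 := key (Set.mem_Ici.mpr le_rfl) (Set.mem_Ici.mpr hx.le) hx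
  simp only [Real.cosh_zero, Real.sinh_zero] at h0
  norm_num at h0
  linarith

lemma aux_q_sinh (p q : ℝ) (hp : 0 < p) (hpq : p < q) :
    q * Real.sinh p < p * Real.sinh q := by
  have key : StrictMonoOn (fun t : ℝ => p * Real.sinh t - t * Real.sinh p) (Set.Ici p) := by
    apply strictMonoOn_of_deriv_pos (convex_Ici p)
    · exact ((continuous_const.mul Real.continuous_sinh).sub
        (continuous_id.mul continuous_const)).continuousOn
    · intro t ht
      rw [interior_Ici] at ht
      have h1 : HasDerivAt (fun t : ℝ => p * Real.sinh t - t * Real.sinh p)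
          (p * Real.cosh t - Real.sinh p) t := by
        have h := ((hasDerivAt_const t p).mul (Real.hasDerivAt_sinh t)).sub
          ((hasDerivAt_id t).mul (hasDerivAt_const t (Real.sinh p)))
        exact h.congr_deriv (by ring)
      rw [h1.deriv]
      have hc : Real.cosh p ≤ Real.cosh t := by
        rw [Real.cosh_le_cosh, abs_of_pos hp, abs_of_pos (hp.trans ht)]
        exact ht.le
      have := aux_sinh_lt p hp
      nlinarith
  have h0 := key (Set.mem_Ici.mpr le_rfl) (Set.mem_Ici.mpr hpq.le) hpq
  simp only at h0
  linarith

lemma aux_key (p q : ℝ) (hp : 0 < p) (hpq : p < q) :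
    (2*q) * (Real.exp (q+p) - Real.exp (q-p)) < (2*p) * (Real.exp (2*q) - 1) := by
  have h := aux_q_sinh p q hp hpq
  rw [Real.sinh_eq, Real.sinh_eq] at h
  have hEq : (0:ℝ) < Real.exp q := Real.exp_pos q
  have hEp : (0:ℝ) < Real.exp p := Real.exp_pos p
  have e1 : Real.exp (q+p) = Real.exp q * Real.exp p := Real.exp_add q p
  have e2 : Real.exp (q-p) = Real.exp q / Real.exp p := Real.exp_sub q p
  have e3 : Real.exp (2*q) = Real.exp q * Real.exp q := by
    rw [two_mul, Real.exp_add]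
  have e4 : Real.exp (-p) = 1 / Real.exp p := by rw [Real.exp_neg, one_div]
  have e5 : Real.exp (-q) = 1 / Real.exp q := by rw [Real.exp_neg, one_div]
  rw [e4, e5] at h
  rw [e1, e2, e3]
  have h3 : q * Real.exp q * (Real.exp p * Real.exp p - 1) <
      p * Real.exp p * (Real.exp q * Real.exp q - 1) := by
    have h2 := mul_lt_mul_of_pos_right h (by positivity : (0:ℝ) < 2 * Real.exp p * Real.exp q)
    have hL : q * ((Real.exp p - 1 / Real.exp p) / 2) * (2 * Real.exp p * Real.exp q)
        = q * Real.exp q * (Real.exp p * Real.exp p - 1) := by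
      field_simp
    have hR : p * ((Real.exp q - 1 / Real.exp q) / 2) * (2 * Real.exp p * Real.exp q)
        = p * Real.exp p * (Real.exp q * Real.exp q - 1) := by
      field_simp
    rwa [hL, hR] at h2
  rw [← mul_lt_mul_iff_of_pos_right hEp]
  have hL2 : 2*q*(Real.exp q * Real.exp p - Real.exp q / Real.exp p) * Real.exp p
      = 2*(q * Real.exp q * (Real.exp p * Real.exp p - 1)) := by
    field_simp
  have hR2 : 2*p*(Real.exp q * Real.exp q - 1) * Real.exp p
      = 2*(p * Real.exp p * (Real.exp q * Real.exp q - 1)) := by ring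
  rw [hL2, hR2]
  linarith


lemma aux_part1 (m s S : ℝ) (hm : 0 < m) (hs : m < s) (hS : s < S) :
    Real.log ((S+m)^2/(S-m)^2) / (2*S) < Real.log ((s+m)^2/(s-m)^2) / (2*s) := by
  have h1 : (0:ℝ) < s - m := by linarith
  have h2 : (0:ℝ) < S - m := by linarith
  rw [show (S+m)^2/(S-m)^2 = ((S+m)/(S-m))^2 by rw [div_pow],
      show (s+m)^2/(s-m)^2 = ((s+m)/(s-m))^2 by rw [div_pow]]
  have hone : 1 < (S+m)/(S-m) := by rw [lt_div_iff₀ h2]; linarith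
  have hrat : (S+m)/(S-m) < (s+m)/(s-m) := by
    rw [div_lt_div_iff₀ h2 h1]; nlinarith
  have hlogpos : 0 < Real.log (((S+m)/(S-m))^2) :=
    Real.log_pos (one_lt_pow₀ hone (by norm_num))
  have hloglt : Real.log (((S+m)/(S-m))^2) < Real.log (((s+m)/(s-m))^2) := by
    apply Real.log_lt_log (by positivity)
    exact pow_lt_pow_left₀ hrat (by positivity) (by norm_num)
  calc Real.log (((S+m)/(S-m))^2) / (2*S)
      < Real.log (((S+m)/(S-m))^2) / (2*s) := by
        apply div_lt_div_of_pos_left hlogpos (by linarith) (by linarith)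
    _ < Real.log (((s+m)/(s-m))^2) / (2*s) :=
        (div_lt_div_iff_of_pos_right (by linarith)).mpr hloglt

/-- for all `y > 0`, `b*_{r+q} < b*_r < b*(y)`. -/
theorem stmt11 (μ σ r q : ℝ) (hμ : 0 < μ) (hσ : 0 < σ) (hr : 0 < r) (hq : 0 < q)
    (y : ℝ) (hy : 0 < y) :
    bstar μ σ (r+q) < bstar μ σ r ∧ bstar μ σ r < bstarY μ σ r q y := by
  have hσ2 : (0:ℝ) < σ^2 := by positivity
  set m : ℝ := μ/σ^2 with hmdef
  set s : ℝ := Real.sqrt (μ^2/σ^4 + 2*r/σ^2) with hsdef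
  set S : ℝ := Real.sqrt (μ^2/σ^4 + 2*(r+q)/σ^2) with hSdef
  have hm : 0 < m := by positivity
  have hm2 : m^2 = μ^2/σ^4 := by
    rw [hmdef, div_pow]; congr 1; ring
  have hms : m < s := by
    rw [hsdef, show μ^2/σ^4 + 2*r/σ^2 = m^2 + 2*r/σ^2 by rw [hm2]]
    rw [show m = Real.sqrt (m^2) from (Real.sqrt_sq hm.le).symm]
    apply Real.sqrt_lt_sqrt (by positivity)
    have : 0 < 2*r/σ^2 := by positivity
    nlinarith [Real.sq_sqrt (by positivity : (0:ℝ) ≤ m^2)]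
  have hsS : s < S := by
    rw [hsdef, hSdef]
    apply Real.sqrt_lt_sqrt (by positivity)
    have : 2*r/σ^2 < 2*(r+q)/σ^2 := by
      rw [div_lt_div_iff₀ hσ2 hσ2]; nlinarith
    linarith
  have hs0 : 0 < s := hm.trans hms
  have hSs : 0 < S - s := by linarith
  have hg1r : gam1 μ σ r = s - m := by simp only [gam1]; rfl
  have hg2r : gam2 μ σ r = -s - m := by simp only [gam2]; rfl
  have hg1Q : gam1 μ σ (r+q) = S - m := by simp only [gam1]; rfl
  have hg2Q : gam2 μ σ (r+q) = -S - m := by simp only [gam2]; rfl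
  constructor
  · have e1 : bstar μ σ (r+q) = Real.log ((S+m)^2/(S-m)^2) / (2*S) := by
      simp only [bstar]; rw [hg1Q, hg2Q]
      rw [show (-S-m)^2 = (S+m)^2 by ring, show S - m - (-S-m) = 2*S by ring]
    have e2 : bstar μ σ r = Real.log ((s+m)^2/(s-m)^2) / (2*s) := by
      simp only [bstar]; rw [hg1r, hg2r]
      rw [show (-s-m)^2 = (s+m)^2 by ring, show s - m - (-s-m) = 2*s by ring]
    rw [e1, e2]
    exact aux_part1 m s S hm hms hsS
  · set X := delP μ σ r q y - gam1 μ σ r * del μ σ r q y with hXdef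
    set Y := delP μ σ r q y - gam2 μ σ r * del μ σ r q y with hYdef
    have hX : X = (S-s)*Real.exp ((S-m)*y) + (S+s)*Real.exp ((-S-m)*y) := by
      rw [hXdef]; simp only [delP, del]; rw [hg1Q, hg2Q, hg1r]; ring
    have hY : Y = (S+s)*Real.exp ((S-m)*y) + (S-s)*Real.exp ((-S-m)*y) := by
      rw [hYdef]; simp only [delP, del]; rw [hg1Q, hg2Q, hg2r]; ring
    have hXpos : 0 < X := by
      rw [hX]
      have := Real.exp_pos ((S-m)*y); have := Real.exp_pos ((-S-m)*y)
      nlinarith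
    have hYpos : 0 < Y := by
      rw [hY]
      have := Real.exp_pos ((S-m)*y); have := Real.exp_pos ((-S-m)*y)
      nlinarith
    have hk := aux_key ((S-s)*y) ((S+s)*y) (mul_pos hSs hy) (by nlinarith)
    rw [show (S+s)*y + (S-s)*y = 2*S*y by ring,
        show (S+s)*y - (S-s)*y = 2*s*y by ring,
        show 2*((S+s)*y) = 2*S*y + 2*s*y by ring, Real.exp_add] at hk
    have hcore : (S+s)*(Real.exp (2*S*y) - Real.exp (2*s*y))
        < (S-s)*(Real.exp (2*S*y)*Real.exp (2*s*y) - 1) := by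
      have h2y : (0:ℝ) < 2*y := by linarith
      have h' : (2*y) * ((S+s)*(Real.exp (2*S*y) - Real.exp (2*s*y)))
          < (2*y) * ((S-s)*(Real.exp (2*S*y)*Real.exp (2*s*y) - 1)) := by
        have eL : (2*y) * ((S+s)*(Real.exp (2*S*y) - Real.exp (2*s*y)))
            = (2*S*y + 2*s*y) * (Real.exp (2*S*y) - Real.exp (2*s*y)) := by ring
        have eR : (2*y) * ((S-s)*(Real.exp (2*S*y)*Real.exp (2*s*y) - 1))
            = 2*((S-s)*y) * (Real.exp (2*S*y)*Real.exp (2*s*y) - 1) := by ring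
        rw [eL, eR]; exact hk
      exact lt_of_mul_lt_mul_left h' h2y.le
    have hYX : Y < X * Real.exp (2*s*y) := by
      rw [hX, hY, show (S-m)*y = 2*S*y + (-S-m)*y by ring, Real.exp_add]
      have hEB : 0 < Real.exp ((-S-m)*y) := Real.exp_pos _
      have h0 : (S+s)*Real.exp (2*S*y) + (S-s)
          < (S-s)*(Real.exp (2*S*y)*Real.exp (2*s*y)) + (S+s)*Real.exp (2*s*y) := by
        linarith [hcore]
      have h1 := mul_lt_mul_of_pos_left h0 hEB
      linarith [h1]
    have hlog : Real.log Y < Real.log X + 2*s*y := by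
      have h := Real.log_lt_log hYpos hYX
      rwa [Real.log_mul hXpos.ne' (Real.exp_pos _).ne', Real.log_exp] at h
    have hg1pos : 0 < gam1 μ σ r := by rw [hg1r]; linarith
    have hg2neg : gam2 μ σ r < 0 := by rw [hg2r]; linarith
    have hbb : (0:ℝ) < (gam2 μ σ r)^2 := by
      rw [sq]; exact mul_pos_of_neg_of_neg hg2neg hg2neg
    have haa : (0:ℝ) < (gam1 μ σ r)^2 := by positivity
    have hsub : gam1 μ σ r - gam2 μ σ r = 2*s := by rw [hg1r, hg2r]; ring
    have hDelta : DeltaF μ σ r q y = (1/(2*s)) *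
        (Real.log ((gam2 μ σ r)^2/(gam1 μ σ r)^2) + (Real.log X - Real.log Y)) := by
      simp only [DeltaF]
      rw [hsub, ← hXdef, ← hYdef]
      rw [show (gam2 μ σ r)^2 * X / ((gam1 μ σ r)^2 * Y)
          = ((gam2 μ σ r)^2/(gam1 μ σ r)^2) * (X/Y) by rw [div_mul_div_comm]]
      rw [Real.log_mul (div_pos hbb haa).ne' (div_pos hXpos hYpos).ne',
        Real.log_div hXpos.ne' hYpos.ne']
    have hbstar : bstar μ σ r = Real.log ((gam2 μ σ r)^2/(gam1 μ σ r)^2) / (2*s) := by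
      simp only [bstar]; rw [hsub]
    have hs2 : (0:ℝ) < 2*s := by linarith
    have hfrac : -y < (Real.log X - Real.log Y)/(2*s) := by
      rw [lt_div_iff₀ hs2, show -y*(2*s) = -(2*s*y) by ring]
      linarith [hlog]
    simp only [bstarY]
    rw [hDelta, hbstar]
    have hexpand : (1/(2*s)) * (Real.log ((gam2 μ σ r)^2/(gam1 μ σ r)^2)
          + (Real.log X - Real.log Y))
        = Real.log ((gam2 μ σ r)^2/(gam1 μ σ r)^2)/(2*s)
          + (Real.log X - Real.log Y)/(2*s) := by ring
    rw [hexpand]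
    linarith
end

section
/- One has δ'(x) > δ'(b*_{r+q}) for all x > b*_{r+q}, and moreover δ(y_u)/δ'(y_u) < μ/r < δ(y_u)/δ'(b*_{r+q}). -/
open Real Set Filter

namespace Stmt13Aux

lemma sq_s {μ σ ρ : ℝ} (hσ : 0 < σ) (hρ : 0 < ρ) :
    Real.sqrt (μ^2/σ^4 + 2*ρ/σ^2) ^ 2 = μ^2/σ^4 + 2*ρ/σ^2 :=
  Real.sq_sqrt (by positivity)

lemma gam1_pos {μ σ ρ : ℝ} (hμ : 0 < μ) (hσ : 0 < σ) (hρ : 0 < ρ) : 0 < gam1 μ σ ρ := by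
  have h : μ/σ^2 < Real.sqrt (μ^2/σ^4 + 2*ρ/σ^2) := by
    rw [Real.lt_sqrt (by positivity)]
    have : (μ/σ^2)^2 = μ^2/σ^4 := by ring
    rw [this]
    have : 0 < 2*ρ/σ^2 := by positivity
    linarith
  unfold gam1; linarith

lemma gam2_neg {μ σ ρ : ℝ} (hμ : 0 < μ) (hσ : 0 < σ) : gam2 μ σ ρ < 0 := by
  have h := Real.sqrt_nonneg (μ^2/σ^4 + 2*ρ/σ^2)
  have : 0 < μ/σ^2 := by positivity
  unfold gam2; linarith

lemma gam_add {μ σ ρ : ℝ} : gam1 μ σ ρ + gam2 μ σ ρ = -(2*μ/σ^2) := by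
  unfold gam1 gam2; ring

lemma gam_mul {μ σ ρ : ℝ} (hσ : 0 < σ) (hρ : 0 < ρ) :
    gam1 μ σ ρ * gam2 μ σ ρ = -(2*ρ/σ^2) := by
  have h := sq_s (μ := μ) hσ hρ
  unfold gam1 gam2
  linear_combination -h

lemma gam_sub_pos {μ σ ρ : ℝ} (hμ : 0 < μ) (hσ : 0 < σ) (hρ : 0 < ρ) :
    0 < gam1 μ σ ρ - gam2 μ σ ρ := by
  have h1 := gam1_pos hμ hσ hρ
  have h2 := gam2_neg (μ := μ) (ρ := ρ) hμ hσ
  linarith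

/-- Key identity: `e^{(γ₁-γ₂) b*} = γ₂²/γ₁²`. -/
lemma exp_bstar {μ σ ρ : ℝ} (hμ : 0 < μ) (hσ : 0 < σ) (hρ : 0 < ρ) :
    Real.exp ((gam1 μ σ ρ - gam2 μ σ ρ) * bstar μ σ ρ) = (gam2 μ σ ρ)^2 / (gam1 μ σ ρ)^2 := by
  have h1 := gam1_pos hμ hσ hρ
  have h2 := gam2_neg (μ := μ) (ρ := ρ) hμ hσ
  have hpos : 0 < (gam2 μ σ ρ)^2 / (gam1 μ σ ρ)^2 :=
    div_pos (pow_pos (neg_pos.mpr h2) 2 |>.trans_eq (by ring)) (pow_pos h1 2)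
  have hne : gam1 μ σ ρ - gam2 μ σ ρ ≠ 0 := by linarith
  unfold bstar
  rw [mul_div_cancel₀ _ hne, Real.exp_log hpos]

lemma key_eq {μ σ ρ : ℝ} (hμ : 0 < μ) (hσ : 0 < σ) (hρ : 0 < ρ) :
    (gam1 μ σ ρ)^2 * Real.exp (gam1 μ σ ρ * bstar μ σ ρ) =
    (gam2 μ σ ρ)^2 * Real.exp (gam2 μ σ ρ * bstar μ σ ρ) := by
  have h1 := gam1_pos hμ hσ hρ
  have h := exp_bstar hμ hσ hρ
  rw [sub_mul, Real.exp_sub] at h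
  have hne : (gam1 μ σ ρ)^2 ≠ 0 := pow_ne_zero _ h1.ne'
  have he : Real.exp (gam2 μ σ ρ * bstar μ σ ρ) ≠ 0 := (Real.exp_pos _).ne'
  field_simp at h
  rw [mul_comm (bstar μ σ ρ)] at h
  linarith [h]

lemma delP_pos {μ σ r q : ℝ} (hμ : 0 < μ) (hσ : 0 < σ) (hr : 0 < r) (hq : 0 < q) (x : ℝ) :
    0 < delP μ σ r q x := by
  have hρ : (0:ℝ) < r + q := by linarith
  have h1 := gam1_pos (ρ := r+q) hμ hσ hρ
  have h2 := gam2_neg (μ := μ) (ρ := r+q) hμ hσ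
  have e1 : 0 < gam1 μ σ (r+q) * Real.exp (gam1 μ σ (r+q) * x) := by positivity
  have e2 : gam2 μ σ (r+q) * Real.exp (gam2 μ σ (r+q) * x) < 0 :=
    mul_neg_of_neg_of_pos h2 (Real.exp_pos _)
  unfold delP; linarith

/-- `δ''(x) > 0` for `x > b*`. -/
lemma delPP_pos {μ σ r q : ℝ} (hμ : 0 < μ) (hσ : 0 < σ) (hr : 0 < r) (hq : 0 < q)
    {x : ℝ} (hx : bstar μ σ (r+q) < x) : 0 < delPP μ σ r q x := by
  have hρ : (0:ℝ) < r + q := by linarith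
  set a := gam1 μ σ (r+q) with ha
  set c := gam2 μ σ (r+q) with hc
  set B := bstar μ σ (r+q) with hB
  have h1 : 0 < a := gam1_pos hμ hσ hρ
  have h2 : c < 0 := gam2_neg hμ hσ
  have hkey := key_eq (μ := μ) (σ := σ) (ρ := r+q) hμ hσ hρ
  -- c² e^{cx} = c² e^{cB} e^{c(x-B)} = a² e^{aB} e^{c(x-B)} < a² e^{aB} e^{a(x-B)} = a² e^{ax}
  have hlt : Real.exp (c * (x - B)) < Real.exp (a * (x - B)) := by
    apply Real.exp_lt_exp.mpr
    have : 0 < x - B := by linarith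
    nlinarith
  have e1 : c^2 * Real.exp (c * x) = (a^2 * Real.exp (a * B)) * Real.exp (c * (x - B)) := by
    rw [hkey, mul_assoc, ← Real.exp_add, ← hc, ← hB]; ring_nf
  have e2 : a^2 * Real.exp (a * x) = (a^2 * Real.exp (a * B)) * Real.exp (a * (x - B)) := by
    rw [mul_assoc, ← Real.exp_add]; ring_nf
  have hC : 0 < a^2 * Real.exp (a * B) := by positivity
  have : c^2 * Real.exp (c * x) < a^2 * Real.exp (a * x) := by
    rw [e1, e2]
    exact mul_lt_mul_of_pos_left hlt hC
  unfold delPP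
  rw [← ha, ← hc]
  linarith

/-- `ρ δ(b*) = μ δ'(b*)`. -/
lemma del_bstar {μ σ r q : ℝ} (hμ : 0 < μ) (hσ : 0 < σ) (hr : 0 < r) (hq : 0 < q) :
    (r+q) * del μ σ r q (bstar μ σ (r+q)) = μ * delP μ σ r q (bstar μ σ (r+q)) := by
  have hρ : (0:ℝ) < r + q := by linarith
  have h1 : 0 < gam1 μ σ (r+q) := gam1_pos hμ hσ hρ
  have hkey := key_eq (μ := μ) (σ := σ) (ρ := r+q) hμ hσ hρ
  have hadd : gam1 μ σ (r+q) + gam2 μ σ (r+q) = -(2*μ/σ^2) := gam_add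
  have hmul : gam1 μ σ (r+q) * gam2 μ σ (r+q) = -(2*(r+q)/σ^2) := gam_mul hσ hρ
  have h0 : (r+q)*(gam1 μ σ (r+q) + gam2 μ σ (r+q)) = μ*(gam1 μ σ (r+q) * gam2 μ σ (r+q)) := by
    rw [hadd, hmul]; ring
  have hane : (gam1 μ σ (r+q))^2 ≠ 0 := pow_ne_zero _ h1.ne'
  unfold del delP
  apply mul_left_cancel₀ hane
  linear_combination ((r+q) - μ*gam1 μ σ (r+q)) * hkey +
    Real.exp (gam2 μ σ (r+q) * bstar μ σ (r+q)) * (gam2 μ σ (r+q) - gam1 μ σ (r+q)) * h0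

lemma hasDerivAt_lin (c x : ℝ) : HasDerivAt (fun y : ℝ => c * y) c x := by
  simpa using (hasDerivAt_id x).const_mul c

lemma hasDerivAt_exp_mul (a x : ℝ) :
    HasDerivAt (fun y : ℝ => Real.exp (a * y)) (Real.exp (a * x) * a) x := by
  simpa using ((hasDerivAt_id x).const_mul a).exp

lemma hasDerivAt_delP {μ σ r q : ℝ} (x : ℝ) :
    HasDerivAt (fun y => delP μ σ r q y) (delPP μ σ r q x) x := by
  have h := ((hasDerivAt_exp_mul (gam1 μ σ (r+q)) x).const_mul (gam1 μ σ (r+q))).sub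
    ((hasDerivAt_exp_mul (gam2 μ σ (r+q)) x).const_mul (gam2 μ σ (r+q)))
  unfold delP delPP
  convert h using 1
  · rfl
  · rfl
  · rfl
  ring

lemma hasDerivAt_del {μ σ r q : ℝ} (x : ℝ) :
    HasDerivAt (fun y => del μ σ r q y) (delP μ σ r q x) x := by
  have h := (hasDerivAt_exp_mul (gam1 μ σ (r+q)) x).sub (hasDerivAt_exp_mul (gam2 μ σ (r+q)) x)
  unfold del delP
  convert h using 1
  · rfl
  · rfl
  · rfl
  ring

/-- `δ'` is strictly increasing on `[b*, ∞)`. -/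
lemma delP_strictMonoOn {μ σ r q : ℝ} (hμ : 0 < μ) (hσ : 0 < σ) (hr : 0 < r) (hq : 0 < q) :
    StrictMonoOn (fun y => delP μ σ r q y) (Set.Ici (bstar μ σ (r+q))) := by
  apply strictMonoOn_of_deriv_pos (convex_Ici _)
  · exact (fun x _ => (hasDerivAt_delP x).continuousAt.continuousWithinAt)
  · intro x hx
    rw [interior_Ici] at hx
    rw [(hasDerivAt_delP x).deriv]
    exact delPP_pos hμ hσ hr hq hx

end Stmt13Aux


/-- `δ'(x) > δ'(b*_{r+q})` for all `x > b*_{r+q}`, and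
`δ(y_u)/δ'(y_u) < μ/r < δ(y_u)/δ'(b*_{r+q})`. -/
theorem stmt13 (μ σ r q : ℝ) (hμ : 0 < μ) (hσ : 0 < σ) (hr : 0 < r) (hq : 0 < q) :
    (∀ x, bstar μ σ (r+q) < x → delP μ σ r q (bstar μ σ (r+q)) < delP μ σ r q x) ∧
    del μ σ r q (yUpper μ σ r q) / delP μ σ r q (yUpper μ σ r q) < μ/r ∧
    μ/r < del μ σ r q (yUpper μ σ r q) / delP μ σ r q (bstar μ σ (r+q)) := by
  classical
  have hρ : (0:ℝ) < r + q := by linarith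
  set B := bstar μ σ (r+q) with hB
  set Y := yUpper μ σ r q with hY
  have hmono := Stmt13Aux.delP_strictMonoOn (μ:=μ) (σ:=σ) (r:=r) (q:=q) hμ hσ hr hq
  have hfrac : μ/(r+q) < μ/r := div_lt_div_of_pos_left hμ hr (by linarith)
  have hBY : B < Y := by
    rw [hY]; unfold yUpper; rw [← hB]; linarith
  have hdpB : 0 < delP μ σ r q B := Stmt13Aux.delP_pos hμ hσ hr hq B
  have hdpY : 0 < delP μ σ r q Y := Stmt13Aux.delP_pos hμ hσ hr hq Y
  have hdelB := Stmt13Aux.del_bstar (μ:=μ) (σ:=σ) (r:=r) (q:=q) hμ hσ hr hq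
  rw [← hB] at hdelB
  have hdelB' : del μ σ r q B = μ/(r+q) * delP μ σ r q B := by
    field_simp
    linarith [hdelB]
  have part1 : ∀ x, B < x → delP μ σ r q B < delP μ σ r q x := fun x hx =>
    hmono Set.self_mem_Ici (le_of_lt hx) hx
  have hYB : Y - B = μ/r - μ/(r+q) := by
    rw [hY]; unfold yUpper; rw [← hB]; ring
  -- lower bound via strict monotonicity of x ↦ δ(x) − δ'(B)·x on [B,∞)
  have hg : StrictMonoOn (fun x => del μ σ r q x - delP μ σ r q B * x) (Set.Ici B) := by
    apply strictMonoOn_of_deriv_pos (convex_Ici _)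
    · intro x _
      exact ((Stmt13Aux.hasDerivAt_del x).sub
        (Stmt13Aux.hasDerivAt_lin (delP μ σ r q B) x)).continuousAt.continuousWithinAt
    · intro x hx
      rw [interior_Ici] at hx
      rw [HasDerivAt.deriv (f := fun x => del μ σ r q x - delP μ σ r q B * x)
        ((Stmt13Aux.hasDerivAt_del x).sub (Stmt13Aux.hasDerivAt_lin (delP μ σ r q B) x))]
      have := part1 x hx
      linarith
  have hlow : del μ σ r q B + delP μ σ r q B * (Y - B) < del μ σ r q Y := by
    have h : del μ σ r q B - delP μ σ r q B * B < del μ σ r q Y - delP μ σ r q B * Y :=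
      hg Set.self_mem_Ici (le_of_lt hBY) hBY
    nlinarith [h]
  -- upper bound via strict antitonicity of x ↦ δ(x) − δ'(Y)·x on [B,Y]
  have hk : StrictAntiOn (fun x => del μ σ r q x - delP μ σ r q Y * x) (Set.Icc B Y) := by
    apply strictAntiOn_of_deriv_neg (convex_Icc _ _)
    · intro x _
      exact ((Stmt13Aux.hasDerivAt_del x).sub
        (Stmt13Aux.hasDerivAt_lin (delP μ σ r q Y) x)).continuousAt.continuousWithinAt
    · intro x hx
      rw [interior_Icc] at hx
      rw [HasDerivAt.deriv (f := fun x => del μ σ r q x - delP μ σ r q Y * x)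
        ((Stmt13Aux.hasDerivAt_del x).sub (Stmt13Aux.hasDerivAt_lin (delP μ σ r q Y) x))]
      have := hmono (Set.mem_Ici.mpr (le_of_lt hx.1)) (Set.mem_Ici.mpr (le_of_lt hBY)) hx.2
      linarith
  have hup : del μ σ r q Y < del μ σ r q B + delP μ σ r q Y * (Y - B) := by
    have h : del μ σ r q Y - delP μ σ r q Y * Y < del μ σ r q B - delP μ σ r q Y * B :=
      hk (Set.mem_Icc.mpr ⟨le_refl B, le_of_lt hBY⟩)
        (Set.mem_Icc.mpr ⟨le_of_lt hBY, le_refl Y⟩) hBY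
    nlinarith [h]
  refine ⟨part1, ?_, ?_⟩
  · rw [div_lt_iff₀ hdpY]
    have h1 : delP μ σ r q B < delP μ σ r q Y := part1 Y hBY
    have h2 : (0:ℝ) < μ/(r+q) := by positivity
    nlinarith [hup, hdelB', h1, h2, hYB]
  · rw [lt_div_iff₀ hdpB]
    nlinarith [hlow, hdelB', hYB]
end

section
/- For all y > 0 the constant K₁(y) admits the closed form K₁(y) = [ ( (γ₂(r)²/γ₁(r)²)·(δ'(y) − γ₁(r)δ(y))/(δ'(y) − γ₂(r)δ(y)) )^{γ₁(r)/(γ₁(r) − γ₂(r))} · ( (γ₁(r)/(−γ₂(r)))·δ'(y) + γ₁(r)·δ(y) ) ]^{−1}. Moreover K₁(y) > 0 for all y > 0, K₁'(y) < 0 for all y ∈ (b*_{r+q}, y_u], and K₁(y_u)·δ'(b*_{r+q}) < 1. -/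
open Real Set Filter

open Real Set Filter

namespace S15

noncomputable def dD (a c y : ℝ) : ℝ := Real.exp (a * y) - Real.exp (c * y)
noncomputable def dP (a c y : ℝ) : ℝ := a * Real.exp (a * y) - c * Real.exp (c * y)
noncomputable def dPP (a c y : ℝ) : ℝ := a^2 * Real.exp (a * y) - c^2 * Real.exp (c * y)

noncomputable def Del (a c g1 g2 y : ℝ) : ℝ :=
  (1/(g1 - g2)) *
    Real.log (g2^2 * (dP a c y - g1 * dD a c y) / (g1^2 * (dP a c y - g2 * dD a c y)))

noncomputable def bY (a c g1 g2 y : ℝ) : ℝ := y + Del a c g1 g2 y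

noncomputable def etaFe (g1 g2 y b : ℝ) : ℝ :=
  g1 * Real.exp (g1 * b) * Real.exp (g2 * y) - g2 * Real.exp (g2 * b) * Real.exp (g1 * y)

noncomputable def etaPe (g1 g2 y b : ℝ) : ℝ :=
  g1 * Real.exp (g1 * b) * (g2 * Real.exp (g2 * y)) -
    g2 * Real.exp (g2 * b) * (g1 * Real.exp (g1 * y))

noncomputable def K1e (a c g1 g2 y : ℝ) : ℝ :=
  (Real.exp (g1 * y) * etaPe g1 g2 y (bY a c g1 g2 y) -
    g1 * Real.exp (g1 * y) * etaFe g1 g2 y (bY a c g1 g2 y)) /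
  (g1 * Real.exp (g1 * bY a c g1 g2 y) *
    (dD a c y * etaPe g1 g2 y (bY a c g1 g2 y) -
      dP a c y * etaFe g1 g2 y (bY a c g1 g2 y)))

noncomputable def K3e (a c g1 g2 y : ℝ) : ℝ :=
  (g2 * Real.exp (g2 * bY a c g1 g2 y) *
      (dD a c y * (g1 * Real.exp (g1 * y)) - dP a c y * Real.exp (g1 * y)) +
    dD a c y * etaPe g1 g2 y (bY a c g1 g2 y) -
      dP a c y * etaFe g1 g2 y (bY a c g1 g2 y)) /
  (g1 * Real.exp (g1 * bY a c g1 g2 y) *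
    (dD a c y * etaPe g1 g2 y (bY a c g1 g2 y) -
      dP a c y * etaFe g1 g2 y (bY a c g1 g2 y)))

noncomputable def K4e (a c g1 g2 y : ℝ) : ℝ :=
  (Real.exp (g1 * y) * dP a c y - g1 * Real.exp (g1 * y) * dD a c y) /
  (dD a c y * etaPe g1 g2 y (bY a c g1 g2 y) -
    dP a c y * etaFe g1 g2 y (bY a c g1 g2 y))

/-- abbreviations used in lemma statements -/
noncomputable def Pg (a c g y : ℝ) : ℝ := dP a c y - g * dD a c y
noncomputable def Rr (a c g1 g2 y : ℝ) : ℝ :=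
  g2^2 * Pg a c g1 y / (g1^2 * Pg a c g2 y)

structure Hyp (μ σ r q a c g1 g2 : ℝ) : Prop where
  hμ : 0 < μ
  hσ : 0 < σ
  hr : 0 < r
  hq : 0 < q
  hg1 : 0 < g1
  hg2 : g2 < 0
  hag : g1 < a
  hcg : c < g2
  hsum : a + c = -2*μ/σ^2
  hsum2 : g1 + g2 = -2*μ/σ^2
  hprod : a*c = -2*(r+q)/σ^2
  hprod2 : g1*g2 = -2*r/σ^2

namespace Hyp

variable {μ σ r q a c g1 g2 : ℝ}

lemma ha (h : Hyp μ σ r q a c g1 g2) : 0 < a := h.hg1.trans h.hag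
lemma hc (h : Hyp μ σ r q a c g1 g2) : c < 0 := h.hcg.trans h.hg2
lemma hg12 (h : Hyp μ σ r q a c g1 g2) : g2 < g1 := h.hg2.trans h.hg1
lemma hg12' (h : Hyp μ σ r q a c g1 g2) : 0 < g1 - g2 := sub_pos.2 h.hg12
lemma hca (h : Hyp μ σ r q a c g1 g2) : c < a := h.hc.trans h.ha
lemma hσ2 (h : Hyp μ σ r q a c g1 g2) : (0:ℝ) < σ^2 := by have := h.hσ; positivity
lemma hsumeq (h : Hyp μ σ r q a c g1 g2) : a + c = g1 + g2 := by rw [h.hsum, h.hsum2]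
lemma hgap (h : Hyp μ σ r q a c g1 g2) : 0 < g1*g2 - a*c := by
  rw [h.hprod, h.hprod2]
  have h1 : -2*r/σ^2 - -2*(r+q)/σ^2 = 2*q/σ^2 := by ring
  have h2 : (0:ℝ) < 2*q/σ^2 := by have := h.hσ2; have := h.hq; positivity
  linarith
lemma hac_neg (h : Hyp μ σ r q a c g1 g2) : a + c < 0 := by
  rw [h.hsum]
  have h2 : (0:ℝ) < 2*μ/σ^2 := by have := h.hσ2; have := h.hμ; positivity
  have h3 : -2*μ/σ^2 = -(2*μ/σ^2) := by ring
  linarith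
lemma hnca (h : Hyp μ σ r q a c g1 g2) : a < -c := by nlinarith [h.hac_neg]
lemma hg_neg (h : Hyp μ σ r q a c g1 g2) : g1 + g2 < 0 := by rw [← h.hsumeq]; exact h.hac_neg
lemma hng (h : Hyp μ σ r q a c g1 g2) : g1 < -g2 := by nlinarith [h.hg_neg]

end Hyp

variable {μ σ r q a c g1 g2 : ℝ}

lemma dD_pos (h : Hyp μ σ r q a c g1 g2) {y : ℝ} (hy : 0 < y) : 0 < dD a c y := by
  have : c * y < a * y := by nlinarith [h.hca]
  simpa [dD, sub_pos] using Real.exp_lt_exp.2 this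

lemma dP_pos (h : Hyp μ σ r q a c g1 g2) (y : ℝ) : 0 < dP a c y := by
  have h1 : 0 < a * Real.exp (a*y) := mul_pos h.ha (Real.exp_pos _)
  have h2 : c * Real.exp (c*y) < 0 := mul_neg_of_neg_of_pos h.hc (Real.exp_pos _)
  unfold dP; linarith

lemma Pg_eq (y g : ℝ) : Pg a c g y = (a - g) * Real.exp (a*y) + (g - c) * Real.exp (c*y) := by
  unfold Pg dP dD; ring

lemma Pg1_pos (h : Hyp μ σ r q a c g1 g2) (y : ℝ) : 0 < Pg a c g1 y := by
  rw [Pg_eq]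
  have h1 : 0 < (a - g1) * Real.exp (a*y) :=
    mul_pos (sub_pos.2 h.hag) (Real.exp_pos _)
  have h2 : 0 < (g1 - c) * Real.exp (c*y) :=
    mul_pos (sub_pos.2 ((h.hc).trans h.hg1)) (Real.exp_pos _)
  linarith

lemma Pg2_pos (h : Hyp μ σ r q a c g1 g2) (y : ℝ) : 0 < Pg a c g2 y := by
  rw [Pg_eq]
  have hag2 : 0 < a - g2 := by have := h.ha; have := h.hg2; linarith
  have hg2c : 0 < g2 - c := by have := h.hcg; linarith
  have h1 : 0 < (a - g2) * Real.exp (a*y) := by positivity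
  have h2 : 0 < (g2 - c) * Real.exp (c*y) := by positivity
  linarith

lemma Rr_pos (h : Hyp μ σ r q a c g1 g2) (y : ℝ) : 0 < Rr a c g1 g2 y := by
  unfold Rr
  exact div_pos (mul_pos (pow_two_pos_of_ne_zero (ne_of_lt h.hg2)) (Pg1_pos h y))
    (mul_pos (pow_two_pos_of_ne_zero (ne_of_gt h.hg1)) (Pg2_pos h y))

lemma Del_eq_log (y : ℝ) : Del a c g1 g2 y = (1/(g1-g2)) * Real.log (Rr a c g1 g2 y) := rfl

lemma exp_Del1 (h : Hyp μ σ r q a c g1 g2) (y : ℝ) :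
    Real.exp (g1 * Del a c g1 g2 y) = Rr a c g1 g2 y ^ (g1/(g1-g2)) := by
  rw [Del_eq_log, Real.rpow_def_of_pos (Rr_pos h y)]
  congr 1
  have := h.hg12'
  field_simp

lemma exp_Del2 (h : Hyp μ σ r q a c g1 g2) (y : ℝ) :
    Real.exp (g2 * Del a c g1 g2 y) = Rr a c g1 g2 y ^ (g1/(g1-g2) - 1) := by
  rw [Del_eq_log, Real.rpow_def_of_pos (Rr_pos h y)]
  congr 1
  have := h.hg12'
  field_simp
  ring

end S15
namespace S15

variable {μ σ r q a c g1 g2 : ℝ}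

lemma hb1 (h : Hyp μ σ r q a c g1 g2) (y : ℝ) :
    Real.exp (g1 * bY a c g1 g2 y) =
      Real.exp (g1 * y) * Rr a c g1 g2 y ^ (g1/(g1-g2)) := by
  rw [bY, mul_add, Real.exp_add, exp_Del1 h]

lemma hb2 (h : Hyp μ σ r q a c g1 g2) (y : ℝ) :
    Real.exp (g2 * bY a c g1 g2 y) =
      Real.exp (g2 * y) * (Rr a c g1 g2 y ^ (g1/(g1-g2)) *
        (g1^2 * (dP a c y - g2 * dD a c y)) / (g2^2 * (dP a c y - g1 * dD a c y))) := by
  rw [bY, mul_add, Real.exp_add, exp_Del2 h]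
  congr 1
  rw [Real.rpow_sub (Rr_pos h y), Real.rpow_one]
  have hP1 : (0:ℝ) < dP a c y - g1 * dD a c y := Pg1_pos h y
  have hP2 : (0:ℝ) < dP a c y - g2 * dD a c y := Pg2_pos h y
  have hg1 := h.hg1; have hg2 := h.hg2
  rw [Rr, Pg, Pg]
  field_simp

lemma den_eq (h : Hyp μ σ r q a c g1 g2) (y : ℝ) :
    dD a c y * etaPe g1 g2 y (bY a c g1 g2 y) -
      dP a c y * etaFe g1 g2 y (bY a c g1 g2 y) =
    Real.exp (g1 * y) * Real.exp (g2 * y) * Rr a c g1 g2 y ^ (g1/(g1-g2)) *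
      (dP a c y - g2 * dD a c y) * g1 * (g1 - g2) / g2 := by
  have hP1 : (0:ℝ) < dP a c y - g1 * dD a c y := Pg1_pos h y
  have hg1 := h.hg1.ne'; have hg2 := h.hg2.ne
  rw [etaPe, etaFe, hb1 h, hb2 h]
  have hP1' : dP a c y - dD a c y * g1 ≠ 0 := by linarith
  field_simp [hP1']
  ring

lemma num_eq (h : Hyp μ σ r q a c g1 g2) (y : ℝ) :
    Real.exp (g1 * y) * etaPe g1 g2 y (bY a c g1 g2 y) -
      g1 * Real.exp (g1 * y) * etaFe g1 g2 y (bY a c g1 g2 y) =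
    g1 * Real.exp (g1 * bY a c g1 g2 y) * Real.exp (g1 * y) * Real.exp (g2 * y) *
      (g2 - g1) := by
  rw [etaPe, etaFe]; ring

lemma K1_closed (h : Hyp μ σ r q a c g1 g2) (y : ℝ) :
    K1e a c g1 g2 y =
      -g2 / (g1 * Rr a c g1 g2 y ^ (g1/(g1-g2)) * (dP a c y - g2 * dD a c y)) := by
  have hP2 : (0:ℝ) < dP a c y - g2 * dD a c y := Pg2_pos h y
  have hRp : (0:ℝ) < Rr a c g1 g2 y ^ (g1/(g1-g2)) := Real.rpow_pos_of_pos (Rr_pos h y) _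
  have hg1 := h.hg1; have hg2 := h.hg2; have hg12 := h.hg12'
  have hE1 := Real.exp_pos (g1 * y); have hE2 := Real.exp_pos (g2 * y)
  rw [K1e, den_eq h, num_eq h, hb1 h]
  field_simp
  ring

end S15
namespace S15

variable {μ σ r q a c g1 g2 : ℝ}

lemma den_ne (h : Hyp μ σ r q a c g1 g2) (y : ℝ) :
    dD a c y * etaPe g1 g2 y (bY a c g1 g2 y) -
      dP a c y * etaFe g1 g2 y (bY a c g1 g2 y) ≠ 0 := by
  rw [den_eq h]
  have hP2 : (0:ℝ) < dP a c y - g2 * dD a c y := Pg2_pos h y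
  have hRp : (0:ℝ) < Rr a c g1 g2 y ^ (g1/(g1-g2)) := Real.rpow_pos_of_pos (Rr_pos h y) _
  have hg1 := h.hg1; have hg2 := h.hg2; have hg12 := h.hg12'
  have hE1 := Real.exp_pos (g1 * y); have hE2 := Real.exp_pos (g2 * y)
  exact div_ne_zero (by positivity) hg2.ne

lemma K4_closed (h : Hyp μ σ r q a c g1 g2) (y : ℝ) :
    K4e a c g1 g2 y =
      g2 * Pg a c g1 y /
        (g1 * (g1 - g2) * Real.exp (g2 * y) * Rr a c g1 g2 y ^ (g1/(g1-g2)) *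
          Pg a c g2 y) := by
  have hP1 : (0:ℝ) < dP a c y - g1 * dD a c y := Pg1_pos h y
  have hP2 : (0:ℝ) < dP a c y - g2 * dD a c y := Pg2_pos h y
  have hg1 := h.hg1; have hg2 := h.hg2; have hg12 := h.hg12'
  have hE1 := Real.exp_pos (g1 * y); have hE2 := Real.exp_pos (g2 * y)
  rw [K4e, div_eq_iff (den_ne h y), den_eq h, Pg, Pg]
  set Rp := Rr a c g1 g2 y ^ (g1/(g1-g2)) with hRpdef
  have hRp : (0:ℝ) < Rp := Real.rpow_pos_of_pos (Rr_pos h y) _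
  field_simp [hP1.ne', hP2.ne', hg1.ne', hg2.ne, hg12.ne', hRp.ne']
  ring_nf
  have hP2' : dP a c y - dD a c y * g2 ≠ 0 := by linarith
  rw [← sub_mul, mul_inv_cancel₀ hP2']

lemma K3_closed (h : Hyp μ σ r q a c g1 g2) (y : ℝ) :
    K3e a c g1 g2 y =
      -g2 / (g1 * (g1 - g2) * Real.exp (g1 * y) * Rr a c g1 g2 y ^ (g1/(g1-g2))) := by
  have hP1 : (0:ℝ) < dP a c y - g1 * dD a c y := Pg1_pos h y
  have hP2 : (0:ℝ) < dP a c y - g2 * dD a c y := Pg2_pos h y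
  have hg1 := h.hg1; have hg2 := h.hg2; have hg12 := h.hg12'
  have hE1 := Real.exp_pos (g1 * y); have hE2 := Real.exp_pos (g2 * y)
  have hD3 : g1 * Real.exp (g1 * bY a c g1 g2 y) *
      (dD a c y * etaPe g1 g2 y (bY a c g1 g2 y) -
        dP a c y * etaFe g1 g2 y (bY a c g1 g2 y)) ≠ 0 :=
    mul_ne_zero (mul_ne_zero hg1.ne' (Real.exp_ne_zero _)) (den_ne h y)
  rw [K3e, div_eq_iff hD3, den_eq h, etaPe, etaFe, hb1 h, hb2 h]
  set Rp := Rr a c g1 g2 y ^ (g1/(g1-g2)) with hRpdef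
  have hRp : (0:ℝ) < Rp := Real.rpow_pos_of_pos (Rr_pos h y) _
  field_simp [hP1.ne', hP2.ne', hg1.ne', hg2.ne, hg12.ne', hRp.ne']
  ring

end S15
namespace S15

variable {μ σ r q a c g1 g2 : ℝ}

lemma hasDerivAt_exp_mul (a y : ℝ) :
    HasDerivAt (fun y => Real.exp (a * y)) (a * Real.exp (a * y)) y := by
  have := (Real.hasDerivAt_exp (a*y)).comp y ((hasDerivAt_id y).const_mul a)
  exact this.congr_deriv (by ring)

lemma hasDerivAt_dD (y : ℝ) : HasDerivAt (dD a c) (dP a c y) y :=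
  (hasDerivAt_exp_mul a y).sub (hasDerivAt_exp_mul c y)

lemma hasDerivAt_dP (y : ℝ) : HasDerivAt (dP a c) (dPP a c y) y := by
  have h1 := ((hasDerivAt_exp_mul a y).const_mul a).sub
    ((hasDerivAt_exp_mul c y).const_mul c)
  have h2 : a * (a * Real.exp (a*y)) - c * (c * Real.exp (c*y)) = dPP a c y := by
    rw [dPP]; ring
  rw [h2] at h1
  exact h1

lemma hasDerivAt_Pg (g y : ℝ) :
    HasDerivAt (fun y => Pg a c g y) (dPP a c y - g * dP a c y) y :=
  (hasDerivAt_dP y).sub ((hasDerivAt_dD y).const_mul g)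

lemma dPP_eq (y : ℝ) : dPP a c y = (a+c) * dP a c y - (a*c) * dD a c y := by
  rw [dPP, dP, dD]; ring

lemma key_poly (hs : a + c = g1 + g2) (y : ℝ) :
    g1 * (dPP a c y - g1 * dP a c y) * Pg a c g2 y -
      g2 * (dPP a c y - g2 * dP a c y) * Pg a c g1 y =
    (g1 - g2) * (g1*g2 - a*c) * dD a c y * dP a c y := by
  rw [dPP_eq, Pg, Pg]
  linear_combination (g1 * dP a c y * (dP a c y - g2 * dD a c y) -
    g2 * dP a c y * (dP a c y - g1 * dD a c y)) * hs

lemma K1_fun_eq (h : Hyp μ σ r q a c g1 g2) :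
    K1e a c g1 g2 = fun y =>
      (-g2/g1) * (g2^2/g1^2) ^ (-(g1/(g1-g2))) *
        Real.exp ((g1/(g1-g2)) * (Real.log (Pg a c g2 y) - Real.log (Pg a c g1 y))) /
        Pg a c g2 y := by
  funext y
  rw [K1_closed h y]
  have hP1 := Pg1_pos h y
  have hP2 := Pg2_pos h y
  have hg1 := h.hg1; have hg2 := h.hg2; have hg12 := h.hg12'
  have hgg : (0:ℝ) < g2^2/g1^2 :=
    div_pos (pow_two_pos_of_ne_zero hg2.ne) (pow_two_pos_of_ne_zero hg1.ne')
  have hsplit : Rr a c g1 g2 y ^ (g1/(g1-g2)) =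
      (g2^2/g1^2) ^ (g1/(g1-g2)) * (Pg a c g1 y / Pg a c g2 y) ^ (g1/(g1-g2)) := by
    rw [← Real.mul_rpow hgg.le (le_of_lt (div_pos hP1 hP2))]
    congr 1
    rw [Rr]
    field_simp
  have hquot : (Pg a c g1 y / Pg a c g2 y) ^ (g1/(g1-g2)) =
      Real.exp ((Real.log (Pg a c g1 y) - Real.log (Pg a c g2 y)) * (g1/(g1-g2))) := by
    rw [Real.rpow_def_of_pos (div_pos hP1 hP2), Real.log_div hP1.ne' hP2.ne']
  have hneg : ((g2^2/g1^2) : ℝ) ^ (-(g1/(g1-g2))) = ((g2^2/g1^2) ^ (g1/(g1-g2)))⁻¹ :=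
    Real.rpow_neg hgg.le _
  rw [hsplit, hquot, hneg]
  rw [show (g1/(g1-g2)) * (Real.log (Pg a c g2 y) - Real.log (Pg a c g1 y)) =
    -((Real.log (Pg a c g1 y) - Real.log (Pg a c g2 y)) * (g1/(g1-g2))) by ring,
    Real.exp_neg]
  have hXne : ((g2^2/g1^2) : ℝ) ^ (g1/(g1-g2)) ≠ 0 :=
    (Real.rpow_pos_of_pos hgg _).ne'
  have hEne := (Real.exp_pos ((Real.log (Pg a c g1 y) - Real.log (Pg a c g2 y)) *
    (g1/(g1-g2)))).ne'
  simp only [Pg] at hXne hEne hP1 hP2 ⊢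
  field_simp [hXne, hEne, hP1.ne', hP2.ne', hg1.ne', hg2.ne]

lemma deriv_K1_neg (h : Hyp μ σ r q a c g1 g2) {y : ℝ} (hy : 0 < y) :
    deriv (K1e a c g1 g2) y < 0 := by
  have hP1 := Pg1_pos h y
  have hP2 := Pg2_pos h y
  have hg1 := h.hg1; have hg2 := h.hg2; have hg12 := h.hg12'
  have hlog1 : HasDerivAt (fun y => Real.log (Pg a c g1 y))
      ((dPP a c y - g1 * dP a c y) / Pg a c g1 y) y :=
    (hasDerivAt_Pg g1 y).log hP1.ne'
  have hlog2 : HasDerivAt (fun y => Real.log (Pg a c g2 y))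
      ((dPP a c y - g2 * dP a c y) / Pg a c g2 y) y :=
    (hasDerivAt_Pg g2 y).log hP2.ne'
  have hu : HasDerivAt (fun y => (g1/(g1-g2)) *
      (Real.log (Pg a c g2 y) - Real.log (Pg a c g1 y)))
      ((g1/(g1-g2)) * ((dPP a c y - g2 * dP a c y) / Pg a c g2 y -
        (dPP a c y - g1 * dP a c y) / Pg a c g1 y)) y :=
    (hlog2.sub hlog1).const_mul _
  have hnum := hu.exp.const_mul ((-g2/g1) * (g2^2/g1^2) ^ (-(g1/(g1-g2))))
  have hfull := hnum.div (hasDerivAt_Pg g2 y) hP2.ne'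
  simp only [Pi.div_def] at hfull
  rw [K1_fun_eq h, hfull.deriv]
  have hkey := key_poly h.hsumeq y
  have key2 : (g1/(g1-g2)) * ((dPP a c y - g2 * dP a c y) / Pg a c g2 y -
        (dPP a c y - g1 * dP a c y) / Pg a c g1 y) * Pg a c g2 y -
      (dPP a c y - g2 * dP a c y) =
      -((g1*g2 - a*c) * dD a c y * dP a c y / Pg a c g1 y) := by
    field_simp
    linear_combination (-1 : ℝ) * hkey
  have hC : (0:ℝ) < (-g2/g1) * (g2^2/g1^2) ^ (-(g1/(g1-g2))) := by
    have hgg : (0:ℝ) < g2^2/g1^2 :=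
      div_pos (pow_two_pos_of_ne_zero hg2.ne) (pow_two_pos_of_ne_zero hg1.ne')
    exact mul_pos (div_pos (neg_pos.2 hg2) hg1) (Real.rpow_pos_of_pos hgg _)
  have hE := Real.exp_pos ((g1/(g1-g2)) *
    (Real.log (Pg a c g2 y) - Real.log (Pg a c g1 y)))
  have hd := dD_pos h hy
  have hdp := dP_pos h y
  have hgap := h.hgap
  have hnumneg : (-g2/g1) * (g2^2/g1^2) ^ (-(g1/(g1-g2))) *
      (Real.exp ((g1/(g1-g2)) * (Real.log (Pg a c g2 y) - Real.log (Pg a c g1 y))) *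
        ((g1/(g1-g2)) * ((dPP a c y - g2 * dP a c y) / Pg a c g2 y -
          (dPP a c y - g1 * dP a c y) / Pg a c g1 y))) * Pg a c g2 y -
      (-g2/g1) * (g2^2/g1^2) ^ (-(g1/(g1-g2))) *
      Real.exp ((g1/(g1-g2)) * (Real.log (Pg a c g2 y) - Real.log (Pg a c g1 y))) *
      (dPP a c y - g2 * dP a c y) < 0 := by
    have heq : (-g2/g1) * (g2^2/g1^2) ^ (-(g1/(g1-g2))) *
      (Real.exp ((g1/(g1-g2)) * (Real.log (Pg a c g2 y) - Real.log (Pg a c g1 y))) *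
        ((g1/(g1-g2)) * ((dPP a c y - g2 * dP a c y) / Pg a c g2 y -
          (dPP a c y - g1 * dP a c y) / Pg a c g1 y))) * Pg a c g2 y -
      (-g2/g1) * (g2^2/g1^2) ^ (-(g1/(g1-g2))) *
      Real.exp ((g1/(g1-g2)) * (Real.log (Pg a c g2 y) - Real.log (Pg a c g1 y))) *
      (dPP a c y - g2 * dP a c y) =
      (-g2/g1) * (g2^2/g1^2) ^ (-(g1/(g1-g2))) *
      Real.exp ((g1/(g1-g2)) * (Real.log (Pg a c g2 y) - Real.log (Pg a c g1 y))) *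
      (-((g1*g2 - a*c) * dD a c y * dP a c y / Pg a c g1 y)) := by
      rw [← key2]; ring
    rw [heq]
    have : (0:ℝ) < (g1*g2 - a*c) * dD a c y * dP a c y / Pg a c g1 y :=
      div_pos (mul_pos (mul_pos hgap hd) hdp) hP1
    nlinarith [mul_pos hC hE]
  exact div_neg_of_neg_of_pos hnumneg (pow_pos hP2 2)

end S15
namespace S15

variable {μ σ r q a c g1 g2 : ℝ}

/-- mirror of `bstar` -/
noncomputable def Bs (a c : ℝ) : ℝ := Real.log (c^2/a^2) / (a - c)

lemma a2_lt_c2 (h : Hyp μ σ r q a c g1 g2) : a^2 < c^2 := by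
  have := h.ha; have := h.hc; have := h.hnca; nlinarith

lemma hexpB (h : Hyp μ σ r q a c g1 g2) : Real.exp ((a - c) * Bs a c) = c^2/a^2 := by
  have hac : (0:ℝ) < a - c := sub_pos.2 h.hca
  have hpos : (0:ℝ) < c^2/a^2 :=
    div_pos (pow_two_pos_of_ne_zero h.hc.ne) (pow_two_pos_of_ne_zero h.ha.ne')
  rw [Bs, mul_div_assoc', mul_comm, mul_div_assoc, div_self hac.ne', mul_one,
    Real.exp_log hpos]

lemma Bs_pos (h : Hyp μ σ r q a c g1 g2) : 0 < Bs a c := by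
  have hac : (0:ℝ) < a - c := sub_pos.2 h.hca
  have h1 : (1:ℝ) < c^2/a^2 :=
    (one_lt_div (pow_two_pos_of_ne_zero h.ha.ne')).2 (a2_lt_c2 h)
  exact div_pos (Real.log_pos h1) hac

lemma dPP_fact (h : Hyp μ σ r q a c g1 g2) (x : ℝ) :
    dPP a c x = c^2 * Real.exp (c*x) * (Real.exp ((a-c)*(x - Bs a c)) - 1) := by
  have h1 : (a-c)*(x - Bs a c) = ((a-c)*x) - ((a-c)* Bs a c) := by ring
  rw [dPP, h1, Real.exp_sub, hexpB h]
  have h2 : Real.exp (a*x) = Real.exp (c*x) * Real.exp ((a-c)*x) := by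
    rw [← Real.exp_add]; congr 1; ring
  rw [h2]
  have hE1 := (Real.exp_pos ((a-c)*x)).ne'
  have hE2 := (Real.exp_pos (c*x)).ne'
  field_simp [h.ha.ne', h.hc.ne]

lemma dPP_pos (h : Hyp μ σ r q a c g1 g2) {x : ℝ} (hx : Bs a c < x) : 0 < dPP a c x := by
  rw [dPP_fact h]
  have h1 : (0:ℝ) < (a-c)*(x - Bs a c) :=
    mul_pos (sub_pos.2 h.hca) (sub_pos.2 hx)
  have h2 : (1:ℝ) < Real.exp ((a-c)*(x - Bs a c)) := by
    rw [← Real.exp_zero]; exact Real.exp_lt_exp.2 h1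
  have h3 : (0:ℝ) < c^2 * Real.exp (c*x) :=
    mul_pos (pow_two_pos_of_ne_zero h.hc.ne) (Real.exp_pos _)
  nlinarith

lemma cont_dD : Continuous (dD a c) := by
  unfold dD; fun_prop

lemma cont_dP : Continuous (dP a c) := by
  unfold dP; fun_prop

lemma dP_strictMono (h : Hyp μ σ r q a c g1 g2) :
    StrictMonoOn (dP a c) (Set.Ici (Bs a c)) := by
  apply strictMonoOn_of_deriv_pos (convex_Ici _) cont_dP.continuousOn
  intro x hx
  rw [interior_Ici] at hx
  rw [(hasDerivAt_dP x).deriv]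
  exact dPP_pos h hx

lemma dB_ratio (h : Hyp μ σ r q a c g1 g2) :
    (r+q) * dD a c (Bs a c) = μ * dP a c (Bs a c) := by
  have hEB : Real.exp (a * Bs a c) = Real.exp (c * Bs a c) * (c^2/a^2) := by
    rw [← hexpB h, ← Real.exp_add]; congr 1; ring
  have hkey : (r+q)*(a+c) = μ*(a*c) := by rw [h.hsum, h.hprod]; ring
  rw [dD, dP, hEB]
  have ha' := h.ha.ne'
  field_simp
  linear_combination (c - a) * hkey

lemma yu_gt (h : Hyp μ σ r q a c g1 g2) : Bs a c < Bs a c + μ/r - μ/(r+q) := by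
  have h1 : μ/(r+q) < μ/r :=
    div_lt_div_of_pos_left h.hμ h.hr (by linarith [h.hq])
  linarith

lemma ratio_lt (h : Hyp μ σ r q a c g1 g2) :
    r * dD a c (Bs a c + μ/r - μ/(r+q)) < μ * dP a c (Bs a c + μ/r - μ/(r+q)) := by
  set B := Bs a c with hBdef
  set yu := Bs a c + μ/r - μ/(r+q) with hyudef
  have hByu : B < yu := yu_gt h
  have hB := Bs_pos h
  have hrq : (0:ℝ) < r + q := by linarith [h.hr, h.hq]
  -- the function x ↦ dD/dP − x is strictly decreasing on [B, yu]
  have hanti : StrictAntiOn (fun x => dD a c x / dP a c x - x) (Set.Icc B yu) := by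
    apply strictAntiOn_of_deriv_neg (convex_Icc _ _)
    · exact ((cont_dD.continuousOn.div cont_dP.continuousOn
        (fun x _ => (dP_pos h x).ne')).sub continuousOn_id)
    · intro x hx
      rw [interior_Icc] at hx
      have hxB : B < x := hx.1
      have hdpx := dP_pos h x
      have hd : HasDerivAt (fun x => dD a c x / dP a c x - x)
          ((dP a c x * dP a c x - dD a c x * dPP a c x) / (dP a c x)^2 - 1) x :=
        ((hasDerivAt_dD x).div (hasDerivAt_dP x) hdpx.ne').sub (hasDerivAt_id x)
      rw [hd.deriv]
      have hdd : 0 < dD a c x := dD_pos h (hB.trans hxB)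
      have hdpp : 0 < dPP a c x := dPP_pos h hxB
      have : (dP a c x * dP a c x - dD a c x * dPP a c x) / (dP a c x)^2 < 1 := by
        rw [div_lt_one (by positivity)]
        nlinarith
      linarith
  have hlt : dD a c yu / dP a c yu - yu < dD a c B / dP a c B - B :=
    hanti (Set.left_mem_Icc.2 hByu.le) (Set.right_mem_Icc.2 hByu.le) hByu
  have hBval : dD a c B / dP a c B = μ/(r+q) := by
    rw [div_eq_div_iff (dP_pos h B).ne' hrq.ne']
    linear_combination dB_ratio h
  have hdpyu := dP_pos h yu
  have h2 : dD a c yu / dP a c yu < μ/r := by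
    rw [hBval] at hlt
    have hyuB : yu - B = μ/r - μ/(r+q) := by rw [hyudef, hBdef]; ring
    linarith
  have h3 : dD a c yu / dP a c yu * (r * dP a c yu) < μ/r * (r * dP a c yu) :=
    mul_lt_mul_of_pos_right h2 (mul_pos h.hr hdpyu)
  have h4 : dD a c yu / dP a c yu * (r * dP a c yu) = r * dD a c yu := by
    field_simp
  have h5 : μ/r * (r * dP a c yu) = μ * dP a c yu := by
    field_simp [h.hr.ne']
  linarith

lemma R_gt_one (h : Hyp μ σ r q a c g1 g2) :
    1 < Rr a c g1 g2 (Bs a c + μ/r - μ/(r+q)) := by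
  set yu := Bs a c + μ/r - μ/(r+q) with hyudef
  have hP2 := Pg2_pos h (y := yu)
  have hg1 := h.hg1
  rw [Rr, one_lt_div (by positivity)]
  have e1 : g2^2 * Pg a c g1 yu - g1^2 * Pg a c g2 yu =
      (g1-g2) * (2*μ/σ^2 * dP a c yu - 2*r/σ^2 * dD a c yu) := by
    rw [Pg, Pg]
    linear_combination (-(g1-g2) * dP a c yu) * h.hsum2 + ((g1-g2) * dD a c yu) * h.hprod2
  have e2 : 2*μ/σ^2 * dP a c yu - 2*r/σ^2 * dD a c yu =
      2/σ^2 * (μ * dP a c yu - r * dD a c yu) := by ring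
  have e3 : 0 < μ * dP a c yu - r * dD a c yu := sub_pos.2 (ratio_lt h)
  have hσ2 := h.hσ2
  nlinarith [h.hg12', mul_pos (mul_pos (h.hg12') (div_pos (by norm_num : (0:ℝ) < 2) hσ2)) e3]

lemma Del_yu_pos (h : Hyp μ σ r q a c g1 g2) :
    0 < Del a c g1 g2 (Bs a c + μ/r - μ/(r+q)) := by
  rw [Del_eq_log]
  have := h.hg12'
  exact mul_pos (by positivity) (Real.log_pos (R_gt_one h))

end S15
namespace S15

variable {μ σ r q a c g1 g2 : ℝ}

lemma K1_pos (h : Hyp μ σ r q a c g1 g2) (y : ℝ) : 0 < K1e a c g1 g2 y := by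
  rw [K1_closed h y]
  have hP2 : (0:ℝ) < dP a c y - g2 * dD a c y := Pg2_pos h y
  have hRp : (0:ℝ) < Rr a c g1 g2 y ^ (g1/(g1-g2)) := Real.rpow_pos_of_pos (Rr_pos h y) _
  have hg1 := h.hg1; have hg2 := h.hg2
  have : (0:ℝ) < -g2 := neg_pos.2 hg2
  positivity

lemma K3_pos (h : Hyp μ σ r q a c g1 g2) (y : ℝ) : 0 < K3e a c g1 g2 y := by
  rw [K3_closed h y]
  have hRp : (0:ℝ) < Rr a c g1 g2 y ^ (g1/(g1-g2)) := Real.rpow_pos_of_pos (Rr_pos h y) _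
  have hg1 := h.hg1; have hg12 := h.hg12'
  have : (0:ℝ) < -g2 := neg_pos.2 h.hg2
  positivity

lemma I3 (h : Hyp μ σ r q a c g1 g2) (y : ℝ) :
    K3e a c g1 g2 y * (g1 * Real.exp (g1 * bY a c g1 g2 y)) +
      K4e a c g1 g2 y * (g2 * Real.exp (g2 * bY a c g1 g2 y)) = 1 := by
  have hP1 := Pg1_pos h y; have hP2 := Pg2_pos h y
  have hRp : (0:ℝ) < Rr a c g1 g2 y ^ (g1/(g1-g2)) := Real.rpow_pos_of_pos (Rr_pos h y) _
  have hg1 := h.hg1; have hg2 := h.hg2; have hg12 := h.hg12'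
  rw [K3_closed h y, K4_closed h y, hb1 h, hb2 h]
  simp only [Pg] at *
  field_simp [hP1.ne', hP2.ne', hg1.ne', hg2.ne, hg12.ne', hRp.ne']
  ring

lemma I4 (h : Hyp μ σ r q a c g1 g2) (y : ℝ) :
    K3e a c g1 g2 y * (g1^2 * Real.exp (g1 * bY a c g1 g2 y)) +
      K4e a c g1 g2 y * (g2^2 * Real.exp (g2 * bY a c g1 g2 y)) = 0 := by
  have hP1 := Pg1_pos h y; have hP2 := Pg2_pos h y
  have hRp : (0:ℝ) < Rr a c g1 g2 y ^ (g1/(g1-g2)) := Real.rpow_pos_of_pos (Rr_pos h y) _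
  have hg1 := h.hg1; have hg2 := h.hg2; have hg12 := h.hg12'
  rw [K3_closed h y, K4_closed h y, hb1 h, hb2 h]
  simp only [Pg] at *
  field_simp [hP1.ne', hP2.ne', hg1.ne', hg2.ne, hg12.ne', hRp.ne']
  ring

lemma I1 (h : Hyp μ σ r q a c g1 g2) (y : ℝ) :
    K3e a c g1 g2 y * Real.exp (g1 * y) + K4e a c g1 g2 y * Real.exp (g2 * y) =
      K1e a c g1 g2 y * dD a c y := by
  have hP1 := Pg1_pos h y; have hP2 := Pg2_pos h y
  have hRp : (0:ℝ) < Rr a c g1 g2 y ^ (g1/(g1-g2)) := Real.rpow_pos_of_pos (Rr_pos h y) _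
  have hg1 := h.hg1; have hg2 := h.hg2; have hg12 := h.hg12'
  rw [K3_closed h y, K4_closed h y, K1_closed h y]
  simp only [Pg] at *
  field_simp [hP1.ne', hP2.ne', hg1.ne', hg2.ne, hg12.ne', hRp.ne']
  ring

lemma I2 (h : Hyp μ σ r q a c g1 g2) (y : ℝ) :
    K3e a c g1 g2 y * (g1 * Real.exp (g1 * y)) +
      K4e a c g1 g2 y * (g2 * Real.exp (g2 * y)) =
      K1e a c g1 g2 y * dP a c y := by
  have hP1 := Pg1_pos h y; have hP2 := Pg2_pos h y
  have hRp : (0:ℝ) < Rr a c g1 g2 y ^ (g1/(g1-g2)) := Real.rpow_pos_of_pos (Rr_pos h y) _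
  have hg1 := h.hg1; have hg2 := h.hg2; have hg12 := h.hg12'
  rw [K3_closed h y, K4_closed h y, K1_closed h y]
  simp only [Pg] at *
  field_simp [hP1.ne', hP2.ne', hg1.ne', hg2.ne, hg12.ne', hRp.ne']
  ring

lemma hroot1 (h : Hyp μ σ r q a c g1 g2) : σ^2/2 * g1^2 + μ*g1 - r = 0 := by
  have h1 : g1^2 = (g1+g2)*g1 - g1*g2 := by ring
  rw [h1, h.hsum2, h.hprod2]
  have := h.hσ2
  have hσ0 := h.hσ.ne'
  field_simp
  ring

lemma hroot2 (h : Hyp μ σ r q a c g1 g2) : σ^2/2 * g2^2 + μ*g2 - r = 0 := by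
  have h1 : g2^2 = (g1+g2)*g2 - g1*g2 := by ring
  rw [h1, h.hsum2, h.hprod2]
  have := h.hσ2
  have hσ0 := h.hσ.ne'
  field_simp
  ring

lemma S_bs (h : Hyp μ σ r q a c g1 g2) (y : ℝ) :
    K3e a c g1 g2 y * Real.exp (g1 * bY a c g1 g2 y) +
      K4e a c g1 g2 y * Real.exp (g2 * bY a c g1 g2 y) = μ/r := by
  rw [eq_div_iff h.hr.ne']
  linear_combination μ * I3 h y + σ^2/2 * I4 h y -
    (K3e a c g1 g2 y * Real.exp (g1 * bY a c g1 g2 y)) * hroot1 h -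
    (K4e a c g1 g2 y * Real.exp (g2 * bY a c g1 g2 y)) * hroot2 h

lemma final (h : Hyp μ σ r q a c g1 g2) :
    K1e a c g1 g2 (Bs a c + μ/r - μ/(r+q)) * dP a c (Bs a c) < 1 := by
  by_contra hcon
  push_neg at hcon
  set B := Bs a c with hBdef
  set yu := Bs a c + μ/r - μ/(r+q) with hyudef
  set K := K1e a c g1 g2 yu with hKdef
  clear_value B yu K
  have hByu : B < yu := by rw [hBdef, hyudef]; exact yu_gt h
  have hDel : 0 < Del a c g1 g2 yu := by rw [hyudef]; exact Del_yu_pos h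
  have hB : 0 < B := by rw [hBdef]; exact Bs_pos h
  have hrq : (0:ℝ) < r + q := by linarith [h.hr, h.hq]
  have hKpos : 0 < K := by rw [hKdef]; exact K1_pos h yu
  have hdpB : 0 < dP a c B := dP_pos h B
  -- step b : K * dD yu > μ/r
  have hW : StrictMonoOn (fun x => K * dD a c x - x) (Set.Icc B yu) := by
    apply strictMonoOn_of_deriv_pos (convex_Icc _ _)
    · exact (continuous_const.mul cont_dD).continuousOn.sub continuousOn_id
    · intro x hx
      rw [interior_Icc] at hx
      have hd : HasDerivAt (fun x => K * dD a c x - x) (K * dP a c x - 1) x :=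
        (((hasDerivAt_dD x).const_mul K)).sub (hasDerivAt_id x)
      rw [hd.deriv]
      have hmono : dP a c B < dP a c x := by
        rw [hBdef]
        exact dP_strictMono h Set.self_mem_Ici (Set.mem_Ici.2 (by rw [← hBdef]; exact hx.1.le))
          (by rw [← hBdef]; exact hx.1)
      nlinarith [mul_lt_mul_of_pos_left hmono hKpos]
  have hWlt : K * dD a c B - B < K * dD a c yu - yu :=
    hW (Set.left_mem_Icc.2 hByu.le) (Set.right_mem_Icc.2 hByu.le) hByu
  have hKB : μ/(r+q) ≤ K * dD a c B := by
    have h1 : dD a c B / dP a c B = μ/(r+q) := by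
      rw [hBdef, div_eq_div_iff (dP_pos h (Bs a c)).ne' hrq.ne']
      linear_combination dB_ratio h
    rw [← h1]
    rw [div_le_iff₀ hdpB] at *
    nlinarith [dD_pos h hB]
  have hstepb : μ/r < K * dD a c yu := by
    have hd2 : yu - B = μ/r - μ/(r+q) := by rw [hyudef, hBdef]; ring
    linarith
  -- the function S
  set K3v := K3e a c g1 g2 yu with hK3def
  set K4v := K4e a c g1 g2 yu with hK4def
  set bs := bY a c g1 g2 yu with hbsdef
  clear_value K3v K4v bs
  have hbs : yu < bs := by
    rw [hbsdef, bY]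
    linarith [hDel]
  have hSyu : K3v * Real.exp (g1 * yu) + K4v * Real.exp (g2 * yu) = K * dD a c yu := by
    rw [hK3def, hK4def, hKdef]; exact I1 h yu
  have hSbs : K3v * Real.exp (g1 * bs) + K4v * Real.exp (g2 * bs) = μ/r := by
    rw [hK3def, hK4def, hbsdef]; exact S_bs h yu
  have hSpyu : 0 < K3v * (g1 * Real.exp (g1 * yu)) + K4v * (g2 * Real.exp (g2 * yu)) := by
    rw [hK3def, hK4def, I2 h yu, ← hKdef]
    exact mul_pos hKpos (dP_pos h yu)
  have hK3g1 : 0 < K3v * g1 := by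
    rw [hK3def]; exact mul_pos (K3_pos h yu) h.hg1
  -- S is strictly increasing on [yu, bs]
  have hS : StrictMonoOn (fun x => K3v * Real.exp (g1 * x) + K4v * Real.exp (g2 * x))
      (Set.Icc yu bs) := by
    apply strictMonoOn_of_deriv_pos (convex_Icc _ _)
    · fun_prop
    · intro x hx
      rw [interior_Icc] at hx
      have hd : HasDerivAt (fun x => K3v * Real.exp (g1 * x) + K4v * Real.exp (g2 * x))
          (K3v * (g1 * Real.exp (g1 * x)) + K4v * (g2 * Real.exp (g2 * x))) x :=
        ((hasDerivAt_exp_mul g1 x).const_mul K3v).add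
          ((hasDerivAt_exp_mul g2 x).const_mul K4v)
      rw [hd.deriv]
      -- factor e^{g1 x} = e^{g2 x} e^{(g1-g2)x}
      have hfac : ∀ z : ℝ, Real.exp (g1 * z) = Real.exp (g2 * z) * Real.exp ((g1-g2) * z) := by
        intro z; rw [← Real.exp_add]; congr 1; ring
      rw [hfac x]
      rw [hfac yu] at hSpyu
      have hu : Real.exp ((g1-g2) * yu) < Real.exp ((g1-g2) * x) :=
        Real.exp_lt_exp.2 (mul_lt_mul_of_pos_left hx.1 h.hg12')
      have hw0 : 0 < Real.exp (g2 * yu) := Real.exp_pos _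
      have hw : 0 < Real.exp (g2 * x) := Real.exp_pos _
      have hv0 : 0 < K3v * g1 * Real.exp ((g1-g2) * yu) + K4v * g2 := by
        by_contra hle
        push_neg at hle
        nlinarith [hSpyu, hw0, hle]
      nlinarith [mul_pos hw hv0, mul_pos (mul_pos hK3g1 (sub_pos.2 hu)) hw]
  have hfin : K3v * Real.exp (g1 * yu) + K4v * Real.exp (g2 * yu) <
      K3v * Real.exp (g1 * bs) + K4v * Real.exp (g2 * bs) :=
    hS (Set.left_mem_Icc.2 hbs.le) (Set.right_mem_Icc.2 hbs.le) hbs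
  rw [hSyu, hSbs] at hfin
  linarith

end S15
namespace S15

variable {μ σ r q a c g1 g2 : ℝ}

lemma K1_closed_form (h : Hyp μ σ r q a c g1 g2) (y : ℝ) :
    K1e a c g1 g2 y =
      ((g2^2/g1^2 * ((dP a c y - g1 * dD a c y)/(dP a c y - g2 * dD a c y)))
          ^ (g1/(g1-g2)) *
        (g1/(-g2) * dP a c y + g1 * dD a c y))⁻¹ := by
  have hP1 := Pg1_pos h y; have hP2 := Pg2_pos h y
  rw [Pg] at hP1 hP2
  have hg1 := h.hg1; have hg2 := h.hg2; have hg12 := h.hg12'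
  have hbase : g2^2/g1^2 * ((dP a c y - g1 * dD a c y)/(dP a c y - g2 * dD a c y)) =
      Rr a c g1 g2 y := by
    rw [Rr, Pg, Pg]
    field_simp
  rw [hbase, K1_closed h y]
  have hRp : (0:ℝ) < Rr a c g1 g2 y ^ (g1/(g1-g2)) := Real.rpow_pos_of_pos (Rr_pos h y) _
  have hng2 : (-g2) ≠ 0 := neg_ne_zero.2 h.hg2.ne
  have hfac : g1/(-g2) * dP a c y + g1 * dD a c y =
      g1/(-g2) * (dP a c y - g2 * dD a c y) := by
    field_simp [h.hg2.ne]
    ring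
  rw [hfac]
  have hD : (0:ℝ) < g1 * Rr a c g1 g2 y ^ (g1/(g1-g2)) * (dP a c y - g2 * dD a c y) := by
    positivity
  have hY : (0:ℝ) < Rr a c g1 g2 y ^ (g1/(g1-g2)) *
      (g1/(-g2) * (dP a c y - g2 * dD a c y)) :=
    mul_pos hRp (mul_pos (div_pos h.hg1 (neg_pos.2 h.hg2)) hP2)
  rw [inv_eq_one_div, div_eq_div_iff hD.ne' hY.ne']
  field_simp [h.hg2.ne]

end S15

open S15 in
lemma hyp_holds {μ σ r q : ℝ} (hμ : 0 < μ) (hσ : 0 < σ) (hr : 0 < r) (hq : 0 < q) :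
    Hyp μ σ r q (gam1 μ σ (r+q)) (gam2 μ σ (r+q)) (gam1 μ σ r) (gam2 μ σ r) := by
  have hσ2 : (0:ℝ) < σ^2 := by positivity
  have hσ4 : (0:ℝ) < σ^4 := by positivity
  have hm : (0:ℝ) < μ/σ^2 := by positivity
  have hmsq : (μ/σ^2)^2 = μ^2/σ^4 := by
    rw [div_pow]; ring
  have harg : ∀ ρ : ℝ, 0 < ρ → (0:ℝ) ≤ μ^2/σ^4 + 2*ρ/σ^2 := by
    intro ρ hρ; positivity
  have hgam1pos : ∀ ρ : ℝ, 0 < ρ → 0 < gam1 μ σ ρ := by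
    intro ρ hρ
    rw [gam1, sub_pos]
    rw [show μ/σ^2 < Real.sqrt (μ^2/σ^4 + 2*ρ/σ^2) ↔ (μ/σ^2)^2 < μ^2/σ^4 + 2*ρ/σ^2 from
      Real.lt_sqrt hm.le]
    rw [hmsq]
    have : (0:ℝ) < 2*ρ/σ^2 := by positivity
    linarith
  have hgam2neg : ∀ ρ : ℝ, gam2 μ σ ρ < 0 := by
    intro ρ
    rw [gam2]
    have := Real.sqrt_nonneg (μ^2/σ^4 + 2*ρ/σ^2)
    linarith
  have hrq : (0:ℝ) < r + q := by linarith
  have hlt : μ^2/σ^4 + 2*r/σ^2 < μ^2/σ^4 + 2*(r+q)/σ^2 := by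
    have : 2*r/σ^2 < 2*(r+q)/σ^2 := by
      gcongr
      linarith
    linarith
  have hsqlt : Real.sqrt (μ^2/σ^4 + 2*r/σ^2) < Real.sqrt (μ^2/σ^4 + 2*(r+q)/σ^2) :=
    Real.sqrt_lt_sqrt (harg r hr) hlt
  have hprodgen : ∀ ρ : ℝ, 0 < ρ → gam1 μ σ ρ * gam2 μ σ ρ = -2*ρ/σ^2 := by
    intro ρ hρ
    have hs := Real.sq_sqrt (harg ρ hρ)
    simp only [gam1, gam2]
    linear_combination (-1 : ℝ) * hs
  exact {
    hμ := hμ, hσ := hσ, hr := hr, hq := hq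
    hg1 := hgam1pos r hr
    hg2 := hgam2neg r
    hag := by simp only [gam1]; linarith
    hcg := by simp only [gam2]; linarith
    hsum := by simp only [gam1, gam2]; ring
    hsum2 := by simp only [gam1, gam2]; ring
    hprod := hprodgen (r+q) hrq
    hprod2 := hprodgen r hr }

/-- closed form of `K₁(y)`, positivity for `y > 0`, `K₁' < 0` on
`(b*_{r+q}, y_u]`, and `K₁(y_u)δ'(b*_{r+q}) < 1`. -/
theorem stmt15 (μ σ r q : ℝ) (hμ : 0 < μ) (hσ : 0 < σ) (hr : 0 < r) (hq : 0 < q) :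
    (∀ y, 0 < y →
      K1 μ σ r q y =
        (((gam2 μ σ r)^2/(gam1 μ σ r)^2 *
            ((delP μ σ r q y - gam1 μ σ r * del μ σ r q y) /
              (delP μ σ r q y - gam2 μ σ r * del μ σ r q y)))
            ^ (gam1 μ σ r/(gam1 μ σ r - gam2 μ σ r)) *
          (gam1 μ σ r/(-gam2 μ σ r) * delP μ σ r q y + gam1 μ σ r * del μ σ r q y))⁻¹ ∧
      0 < K1 μ σ r q y) ∧
    (∀ y ∈ Set.Ioc (bstar μ σ (r+q)) (yUpper μ σ r q), deriv (K1 μ σ r q) y < 0) ∧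
    K1 μ σ r q (yUpper μ σ r q) * delP μ σ r q (bstar μ σ (r+q)) < 1 := by
  have h := hyp_holds hμ hσ hr hq
  refine ⟨fun y _ => ⟨S15.K1_closed_form h y, S15.K1_pos h y⟩, fun y hy => ?_, S15.final h⟩
  have hy0 : 0 < y := lt_trans (S15.Bs_pos h) hy.1
  exact S15.deriv_K1_neg h hy0
end

section
/- For all y ∈ [y_l, y_u] and all b ∈ [b*_{r+q}, y] one has e₃(b, y) > 0 and e₄(b, y) < 0. -/
open Real Set Filter

section Aux

lemma gam1_pos {μ σ ρ : ℝ} (hμ : 0 < μ) (hσ : 0 < σ) (hρ : 0 < ρ) : 0 < gam1 μ σ ρ := by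
  unfold gam1
  rw [sub_pos]
  refine (Real.lt_sqrt (by positivity)).mpr ?_
  have h4 : σ^4 = (σ^2)^2 := by ring
  rw [div_pow, ← h4]
  have : 0 < 2*ρ/σ^2 := by positivity
  linarith

lemma gam2_neg {μ σ ρ : ℝ} (hμ : 0 < μ) (hσ : 0 < σ) : gam2 μ σ ρ < 0 := by
  unfold gam2
  have h1 : 0 ≤ Real.sqrt (μ^2/σ^4 + 2*ρ/σ^2) := Real.sqrt_nonneg _
  have h2 : 0 < μ/σ^2 := by positivity
  linarith

lemma gam1_lt {μ σ r q : ℝ} (hσ : 0 < σ) (hr : 0 < r) (hq : 0 < q) :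
    gam1 μ σ r < gam1 μ σ (r+q) := by
  unfold gam1
  have h2 : (0:ℝ) < σ^2 := by positivity
  have key : μ^2/σ^4 + 2*r/σ^2 < μ^2/σ^4 + 2*(r+q)/σ^2 := by
    have : 2*r/σ^2 < 2*(r+q)/σ^2 := by
      rw [div_lt_div_iff₀ h2 h2]; nlinarith
    linarith
  have := Real.sqrt_lt_sqrt (by positivity : (0:ℝ) ≤ μ^2/σ^4 + 2*r/σ^2) key
  linarith

lemma gam_quad1 {μ σ ρ : ℝ} (hσ : 0 < σ) (hnn : 0 ≤ μ^2/σ^4 + 2*ρ/σ^2) :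
    σ^2/2 * (gam1 μ σ ρ)^2 + μ * gam1 μ σ ρ = ρ := by
  unfold gam1
  set s := Real.sqrt (μ^2/σ^4 + 2*ρ/σ^2) with hsdef
  have hs : s^2 = μ^2/σ^4 + 2*ρ/σ^2 := Real.sq_sqrt hnn
  have h2 : (σ:ℝ)^2 ≠ 0 := by positivity
  have hs4 : s^2 * σ^4 = μ^2 + 2*ρ*σ^2 := by
    rw [hs]; field_simp
  field_simp
  linear_combination hs4

lemma gam_quad2 {μ σ ρ : ℝ} (hσ : 0 < σ) (hnn : 0 ≤ μ^2/σ^4 + 2*ρ/σ^2) :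
    σ^2/2 * (gam2 μ σ ρ)^2 + μ * gam2 μ σ ρ = ρ := by
  unfold gam2
  set s := Real.sqrt (μ^2/σ^4 + 2*ρ/σ^2) with hsdef
  have hs : s^2 = μ^2/σ^4 + 2*ρ/σ^2 := Real.sq_sqrt hnn
  have h2 : (σ:ℝ)^2 ≠ 0 := by positivity
  have hs4 : s^2 * σ^4 = μ^2 + 2*ρ*σ^2 := by
    rw [hs]; field_simp
  field_simp
  linear_combination hs4

lemma key_pos {Γ₁ Γ₂ b y A C : ℝ} (hΓ : Γ₂ ≤ Γ₁) (hby : b ≤ y) (hA : 0 < A)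
    (h : 0 < A * Real.exp (Γ₁*b) + C * Real.exp (Γ₂*b)) :
    0 < A * Real.exp (Γ₁*y) + C * Real.exp (Γ₂*y) := by
  rcases le_or_gt 0 C with hC | hC
  · positivity
  · have e1 : Real.exp (Γ₁*y) = Real.exp (Γ₁*b) * Real.exp (Γ₁*(y-b)) := by
      rw [← Real.exp_add]; ring_nf
    have e2 : Real.exp (Γ₂*y) = Real.exp (Γ₂*b) * Real.exp (Γ₂*(y-b)) := by
      rw [← Real.exp_add]; ring_nf
    have e3 : Real.exp (Γ₂*(y-b)) ≤ Real.exp (Γ₁*(y-b)) :=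
      Real.exp_le_exp.mpr (by nlinarith)
    rw [e1, e2]
    have h1 : (-C) * Real.exp (Γ₂*b) < A * Real.exp (Γ₁*b) := by linarith
    have h2 : (-C) * Real.exp (Γ₂*b) * Real.exp (Γ₂*(y-b)) <
        A * Real.exp (Γ₁*b) * Real.exp (Γ₁*(y-b)) := by
      calc (-C) * Real.exp (Γ₂*b) * Real.exp (Γ₂*(y-b))
          ≤ (-C) * Real.exp (Γ₂*b) * Real.exp (Γ₁*(y-b)) := by
            apply mul_le_mul_of_nonneg_left e3
            exact mul_nonneg (by linarith) (Real.exp_pos _).le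
        _ < A * Real.exp (Γ₁*b) * Real.exp (Γ₁*(y-b)) := by
            apply mul_lt_mul_of_pos_right h1 (Real.exp_pos _)
    linarith

lemma bstar_key {μ σ ρ : ℝ} (hμ : 0 < μ) (hσ : 0 < σ) (hρ : 0 < ρ) :
    (gam1 μ σ ρ)^2 * Real.exp (gam1 μ σ ρ * bstar μ σ ρ) =
    (gam2 μ σ ρ)^2 * Real.exp (gam2 μ σ ρ * bstar μ σ ρ) := by
  have hg1 := gam1_pos hμ hσ hρ
  have hg2 : gam2 μ σ ρ < 0 := gam2_neg hμ hσ
  set g1 := gam1 μ σ ρ with hg1def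
  set g2 := gam2 μ σ ρ with hg2def
  have hne : g1 - g2 ≠ 0 := (show (0:ℝ) < g1 - g2 by linarith).ne'
  have h1sq : (0:ℝ) < g1^2 := by positivity
  have h2sq : (0:ℝ) < g2^2 := by nlinarith
  have hB : (g1 - g2) * bstar μ σ ρ = Real.log (g2^2/g1^2) := by
    unfold bstar
    rw [← hg1def, ← hg2def]
    field_simp
  have hexp : Real.exp ((g1-g2) * bstar μ σ ρ) = g2^2/g1^2 := by
    rw [hB, Real.exp_log (div_pos h2sq h1sq)]
  have hsplit : Real.exp (g1 * bstar μ σ ρ) =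
      Real.exp (g2 * bstar μ σ ρ) * (g2^2/g1^2) := by
    rw [← hexp, ← Real.exp_add]; ring_nf
  rw [hsplit]
  field_simp

lemma Vfun_ge {μ σ ρ b : ℝ} (hμ : 0 < μ) (hσ : 0 < σ) (hρ : 0 < ρ)
    (hb : bstar μ σ ρ ≤ b) :
    Vfun μ σ ρ b = μ/ρ + b - bstar μ σ ρ := by
  have hg1 := gam1_pos hμ hσ hρ
  have hg2 : gam2 μ σ ρ < 0 := gam2_neg hμ hσ
  have hkey := bstar_key hμ hσ hρ
  have hnn : 0 ≤ μ^2/σ^4 + 2*ρ/σ^2 := by positivity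
  have hq1 := gam_quad1 (μ:=μ) (ρ:=ρ) hσ hnn
  have hq2 := gam_quad2 (μ:=μ) (ρ:=ρ) hσ hnn
  unfold Vfun
  rw [if_neg (not_lt.mpr hb)]
  set g1 := gam1 μ σ ρ
  set g2 := gam2 μ σ ρ
  set B := bstar μ σ ρ
  have hden : 0 < g1 * Real.exp (g1*B) - g2*Real.exp (g2*B) := by
    nlinarith [Real.exp_pos (g1*B), Real.exp_pos (g2*B),
      mul_pos hg1 (Real.exp_pos (g1*B))]
  have hnum : μ * (g1*Real.exp (g1*B) - g2*Real.exp (g2*B)) =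
      ρ * (Real.exp (g1*B) - Real.exp (g2*B)) := by
    linear_combination Real.exp (g1*B) * hq1 - Real.exp (g2*B) * hq2 - σ^2/2 * hkey
  have hfrac : (Real.exp (g1*B) - Real.exp (g2*B)) /
      (g1*Real.exp (g1*B) - g2*Real.exp (g2*B)) = μ/ρ := by
    rw [div_eq_div_iff hden.ne' hρ.ne']; linarith [hnum]
  rw [hfrac]

end Aux

/-- for all `y ∈ [y_l, y_u]` and all `b ∈ [b*_{r+q}, y]`, one has
`e₃(b,y) > 0` and `e₄(b,y) < 0`. -/
theorem stmt17 (μ σ r q : ℝ) (hμ : 0 < μ) (hσ : 0 < σ) (hr : 0 < r) (hq : 0 < q)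
    (yl : ℝ) (hyl : yl ∈ Set.Ioo 0 (yUpper μ σ r q)) (hylf : fF μ σ r q yl = 0)
    (hyluniq : ∀ y ∈ Set.Ioo 0 (yUpper μ σ r q), fF μ σ r q y = 0 → y = yl)
    (hylb : yl ∈ Set.Ioo (bstar μ σ (r+q)) (yUpper μ σ r q)) :
    ∀ y ∈ Set.Icc yl (yUpper μ σ r q), ∀ b ∈ Set.Icc (bstar μ σ (r+q)) y,
      0 < e3F μ σ r q b y ∧ e4F μ σ r q b y < 0 := by
  intro y hy b hb
  have hrq : (0:ℝ) < r + q := by linarith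
  have hΓ1 : 0 < gam1 μ σ (r+q) := gam1_pos hμ hσ hrq
  have hΓ2 : gam2 μ σ (r+q) < 0 := gam2_neg hμ hσ
  have hg1 : 0 < gam1 μ σ r := gam1_pos hμ hσ hr
  have hg2 : gam2 μ σ r < 0 := gam2_neg hμ hσ
  have hgΓ : gam1 μ σ r < gam1 μ σ (r+q) := gam1_lt hσ hr hq
  have hbb : bstar μ σ (r+q) ≤ b := hb.1
  have hby : b ≤ y := hb.2
  have hVb : Vfun μ σ (r+q) b = μ/(r+q) + b - bstar μ σ (r+q) := Vfun_ge hμ hσ hrq hbb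
  have hVb0 : 0 < Vfun μ σ (r+q) b := by
    rw [hVb]
    have : 0 < μ/(r+q) := by positivity
    linarith
  have hVbu : Vfun μ σ (r+q) b ≤ μ/r := by
    rw [hVb]
    have h1 : y ≤ yUpper μ σ r q := hy.2
    unfold yUpper at h1
    linarith
  have hq1 := gam_quad1 (μ:=μ) (ρ:=r) hσ (by positivity)
  have hmug : μ * gam1 μ σ r < r := by
    have h2 : 0 < σ^2/2 * (gam1 μ σ r)^2 :=
      mul_pos (by positivity) (by positivity)
    linarith
  have h1V : gam1 μ σ r * Vfun μ σ (r+q) b < 1 := by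
    have h5 : gam1 μ σ r * μ / r < 1 := (div_lt_one hr).mpr (by nlinarith)
    have h6 : gam1 μ σ r * Vfun μ σ (r+q) b ≤ gam1 μ σ r * (μ/r) :=
      mul_le_mul_of_nonneg_left hVbu hg1.le
    have h7 : gam1 μ σ r * (μ/r) = gam1 μ σ r * μ / r := by ring
    linarith
  have hDpos : 0 < psiP μ σ (r+q) b * phiF μ σ (r+q) b -
      psiF μ σ (r+q) b * phiP μ σ (r+q) b := by
    simp only [psiP, phiF, psiF, phiP]
    nlinarith [mul_pos (mul_pos (show 0 < gam1 μ σ (r+q) - gam2 μ σ (r+q) by linarith)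
      (Real.exp_pos (gam1 μ σ (r+q)*b))) (Real.exp_pos (gam2 μ σ (r+q)*b))]
  have hDne : psiP μ σ (r+q) b * phiF μ σ (r+q) b -
      psiF μ σ (r+q) b * phiP μ σ (r+q) b ≠ 0 := hDpos.ne'
  have hGb : e1F μ σ r q b * Real.exp (gam1 μ σ (r+q)*b) +
      e2F μ σ r q b * Real.exp (gam2 μ σ (r+q)*b) = Vfun μ σ (r+q) b := by
    simp only [e1F, e2F]
    simp only [psiP, phiF, psiF, phiP] at hDne ⊢
    field_simp
    have hne : -gam2 μ σ (r+q) + gam1 μ σ (r+q) ≠ 0 := ne_of_gt (by linarith)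
    linear_combination Vfun μ σ (r+q) b * mul_inv_cancel₀ hne
  have hGpb : e1F μ σ r q b * (gam1 μ σ (r+q) * Real.exp (gam1 μ σ (r+q)*b)) +
      e2F μ σ r q b * (gam2 μ σ (r+q) * Real.exp (gam2 μ σ (r+q)*b)) = 1 := by
    simp only [e1F, e2F]
    simp only [psiP, phiF, psiF, phiP] at hDne ⊢
    field_simp
    have hne : -gam2 μ σ (r+q) + gam1 μ σ (r+q) ≠ 0 := ne_of_gt (by linarith)
    linear_combination mul_inv_cancel₀ hne
  have hE1 : 0 < e1F μ σ r q b := by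
    simp only [e1F]
    apply div_pos ?_ hDpos
    simp only [phiF, phiP]
    nlinarith [Real.exp_pos (gam2 μ σ (r+q)*b),
      mul_pos (Real.exp_pos (gam2 μ σ (r+q)*b)) hVb0]
  have hGy : 0 < e1F μ σ r q b * Real.exp (gam1 μ σ (r+q)*y) +
      e2F μ σ r q b * Real.exp (gam2 μ σ (r+q)*y) :=
    key_pos (by linarith) hby hE1 (by rw [hGb]; exact hVb0)
  have hA2 : 0 < e1F μ σ r q b * (gam1 μ σ (r+q) - gam1 μ σ r) :=
    mul_pos hE1 (by linarith)
  have hatb : 0 < (e1F μ σ r q b * (gam1 μ σ (r+q) - gam1 μ σ r)) *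
      Real.exp (gam1 μ σ (r+q)*b) +
      (e2F μ σ r q b * (gam2 μ σ (r+q) - gam1 μ σ r)) *
      Real.exp (gam2 μ σ (r+q)*b) := by
    have heq : (e1F μ σ r q b * (gam1 μ σ (r+q) - gam1 μ σ r)) *
        Real.exp (gam1 μ σ (r+q)*b) +
        (e2F μ σ r q b * (gam2 μ σ (r+q) - gam1 μ σ r)) *
        Real.exp (gam2 μ σ (r+q)*b) = 1 - gam1 μ σ r * Vfun μ σ (r+q) b := by
      linear_combination hGpb - gam1 μ σ r * hGb
    rw [heq]
    linarith
  have hUy : 0 < (e1F μ σ r q b * (gam1 μ σ (r+q) - gam1 μ σ r)) *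
      Real.exp (gam1 μ σ (r+q)*y) +
      (e2F μ σ r q b * (gam2 μ σ (r+q) - gam1 μ σ r)) *
      Real.exp (gam2 μ σ (r+q)*y) :=
    key_pos (by linarith) hby hA2 hatb
  have hWpos : 0 < psiP μ σ r y * phiF μ σ r y - psiF μ σ r y * phiP μ σ r y := by
    simp only [psiP, phiF, psiF, phiP]
    nlinarith [mul_pos (mul_pos (show 0 < gam1 μ σ r - gam2 μ σ r by linarith)
      (Real.exp_pos (gam1 μ σ r*y))) (Real.exp_pos (gam2 μ σ r*y))]
  constructor
  · simp only [e3F]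
    apply div_pos ?_ hWpos
    have heq : e1F μ σ r q b * (phiF μ σ r y * psiP μ σ (r+q) y -
        phiP μ σ r y * psiF μ σ (r+q) y) +
        e2F μ σ r q b * (phiF μ σ r y * phiP μ σ (r+q) y -
        phiP μ σ r y * phiF μ σ (r+q) y) =
        Real.exp (gam2 μ σ r * y) *
          (((e1F μ σ r q b * (gam1 μ σ (r+q) - gam1 μ σ r)) *
            Real.exp (gam1 μ σ (r+q)*y) +
            (e2F μ σ r q b * (gam2 μ σ (r+q) - gam1 μ σ r)) *
            Real.exp (gam2 μ σ (r+q)*y)) +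
          (gam1 μ σ r - gam2 μ σ r) *
            (e1F μ σ r q b * Real.exp (gam1 μ σ (r+q)*y) +
             e2F μ σ r q b * Real.exp (gam2 μ σ (r+q)*y))) := by
      simp only [psiF, phiF, psiP, phiP]
      ring
    rw [heq]
    apply mul_pos (Real.exp_pos _)
    have h8 := mul_pos (show 0 < gam1 μ σ r - gam2 μ σ r by linarith) hGy
    linarith
  · simp only [e4F]
    apply div_neg_of_neg_of_pos ?_ hWpos
    have heq : e1F μ σ r q b * (psiP μ σ r y * psiF μ σ (r+q) y -
        psiF μ σ r y * psiP μ σ (r+q) y) +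
        e2F μ σ r q b * (psiP μ σ r y * phiF μ σ (r+q) y -
        psiF μ σ r y * phiP μ σ (r+q) y) =
        -(Real.exp (gam1 μ σ r * y) *
          ((e1F μ σ r q b * (gam1 μ σ (r+q) - gam1 μ σ r)) *
            Real.exp (gam1 μ σ (r+q)*y) +
           (e2F μ σ r q b * (gam2 μ σ (r+q) - gam1 μ σ r)) *
            Real.exp (gam2 μ σ (r+q)*y))) := by
      simp only [psiF, phiF, psiP, phiP]
      ring
    rw [heq]
    have := mul_pos (Real.exp_pos (gam1 μ σ r * y)) hUy
    linarith
end
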